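/- arXiv:2506.11704 — 4 statements merged into one kernel-verified Lean document; each statement's English description precedes it below -/
import Mathlib

section
/- Let T1 and T2 be finite trees, and let U be an isometric-universal graph for the family {T1, T2} that is both minimum (no isometric-universal graph for {T1, T2} has fewer vertices) and minimal (no proper subgraph of U is isometric-universal for {T1, T2}). Then U is a tree. -/
open SimpleGraph

/-- `φ` realizes `G` as an isometric subgraph of `U`: it maps edges to edges and
preserves all distances, where `edist` takes the value `⊤` between vertices in
different connected components. -/
def IsIsometricEmbedding {V W : Type} (G : SimpleGraph V) (U : SimpleGraph W)
    (φ : V → W) : Prop :=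
  (∀ u v : V, G.Adj u v → U.Adj (φ u) (φ v)) ∧
  ∀ u v : V, G.edist u v = U.edist (φ u) (φ v)

/-- `U` is an isometric-universal graph for the pair `{G₁, G₂}`: both `G₁` and `G₂`
are isomorphic to isometric subgraphs of `U`. -/
def IsIsoUniversalPair {V₁ V₂ W : Type} (G₁ : SimpleGraph V₁) (G₂ : SimpleGraph V₂)
    (U : SimpleGraph W) : Prop :=
  (∃ φ : V₁ → W, IsIsometricEmbedding G₁ U φ) ∧
  (∃ φ : V₂ → W, IsIsometricEmbedding G₂ U φ)

namespace StmtAux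


variable {α β : Type}

lemma edist_le_walk {G : SimpleGraph α} {G' : SimpleGraph β} (f : α → β)
    (h : ∀ a b, G.Adj a b → f a = f b ∨ G'.Adj (f a) (f b)) :
    ∀ {a b : α} (p : G.Walk a b), G'.edist (f a) (f b) ≤ p.length := by
  intro a b p
  induction p with
  | nil => simp [edist_self]
  | cons hadj q ih =>
    rename_i x y z
    rcases h _ _ hadj with he | ha
    · rw [he]
      exact ih.trans (by exact_mod_cast Nat.le_succ _)
    · calc G'.edist (f x) (f z) ≤ G'.edist (f x) (f y) + G'.edist (f y) (f z) :=
            SimpleGraph.edist_triangle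
        _ ≤ 1 + q.length := add_le_add (by rw [edist_eq_one_iff_adj.2 ha]) ih
        _ = ((q.length + 1 : ℕ) : ℕ∞) := by push_cast; ring

lemma edist_le_of_forall_adj {G : SimpleGraph α} {G' : SimpleGraph β} (f : α → β)
    (h : ∀ a b, G.Adj a b → f a = f b ∨ G'.Adj (f a) (f b)) (a b : α) :
    G'.edist (f a) (f b) ≤ G.edist a b := by
  rw [SimpleGraph.edist_eq_sInf]
  refine le_sInf ?_
  rintro _ ⟨w, rfl⟩
  exact edist_le_walk f h w

/-- The cut lemma: if every edge of `U` lies within `A` or within `B`, `q ∉ A`,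
and `p`,`q` are equidistant from every vertex of `A ∩ B`, then any walk from a
vertex of `A` to `q` has length at least the distance to `p`. -/
lemma cut_walk_bound {U : SimpleGraph α} {A B : Set α} {p q : α}
    (hcut : ∀ x y, U.Adj x y → (x ∈ A ∧ y ∈ A) ∨ (x ∈ B ∧ y ∈ B))
    (heq : ∀ w, w ∈ A → w ∈ B → U.edist w p = U.edist w q)
    (hqA : q ∉ A) :
    ∀ {a c : α} (ω : U.Walk a c), c = q → a ∈ A → U.edist a p ≤ ω.length := by
  intro a c ω
  induction ω with
  | nil => rintro rfl ha; exact absurd ha hqA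
  | cons hadj ω' ih =>
    rename_i x y c
    rintro rfl hx
    by_cases hxB : x ∈ B
    · rw [heq x hx hxB]
      exact SimpleGraph.edist_le _
    · rcases hcut _ _ hadj with ⟨-, hyA⟩ | ⟨hxB', -⟩
      · calc U.edist x p ≤ U.edist x y + U.edist y p := SimpleGraph.edist_triangle
          _ ≤ 1 + ω'.length := add_le_add (by rw [edist_eq_one_iff_adj.2 hadj]) (ih rfl hyA)
          _ = ((SimpleGraph.Walk.cons hadj ω').length : ℕ∞) := by
              rw [SimpleGraph.Walk.length_cons]; push_cast; ring
      · exact absurd hxB' hxB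
lemma cut_edist_le {U : SimpleGraph α} {A B : Set α} {p q : α}
    (hcut : ∀ x y, U.Adj x y → (x ∈ A ∧ y ∈ A) ∨ (x ∈ B ∧ y ∈ B))
    (heq : ∀ w, w ∈ A → w ∈ B → U.edist w p = U.edist w q)
    (hqA : q ∉ A) {a : α} (ha : a ∈ A) : U.edist a p ≤ U.edist a q := by
  by_cases hr : U.Reachable a q
  · obtain ⟨ω, hω⟩ := hr.exists_walk_length_eq_edist
    rw [← hω]
    exact cut_walk_bound hcut heq hqA ω rfl ha
  · rw [SimpleGraph.edist_eq_top_of_not_reachable hr]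
    exact le_top



variable {α : Type}

lemma IsTree.length_eq_edist {T : SimpleGraph α} (hT : T.IsTree) {u v : α}
    (p : T.Walk u v) (hp : p.IsPath) : (p.length : ℕ∞) = T.edist u v := by
  classical
  obtain ⟨w, hw⟩ := (hT.isConnected u v).exists_walk_length_eq_edist
  have hbp : w.bypass.IsPath := SimpleGraph.Walk.bypass_isPath w
  have hpe : p = w.bypass := ((hT.existsUnique_path u v).unique hp hbp)
  refine le_antisymm ?_ (SimpleGraph.edist_le p)
  rw [hpe, ← hw]
  exact_mod_cast Nat.cast_le.2 (SimpleGraph.Walk.length_bypass_le w)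

lemma tree_trichotomy {T : SimpleGraph α} (hT : T.IsTree) {u v t : α}
    (hadj : T.Adj u t) (htv : T.edist t v + 1 = T.edist u v) (w : α) :
    (T.edist w v = T.edist w u + T.edist u v ∧ T.edist w t = T.edist w u + 1) ∨
    (T.edist w v ≠ T.edist w u + T.edist u v ∧ T.edist w t + 1 = T.edist w u) := by
  classical
  obtain ⟨ptv, hptv, -⟩ := hT.existsUnique_path t v
  obtain ⟨pwu, hpwu, -⟩ := hT.existsUnique_path w u
  have hetv : (ptv.length : ℕ∞) = T.edist t v := IsTree.length_eq_edist hT ptv hptv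
  have hewu : (pwu.length : ℕ∞) = T.edist w u := IsTree.length_eq_edist hT pwu hpwu
  have htu1 : T.edist t u = 1 := edist_eq_one_iff_adj.2 hadj.symm
  have huv : T.edist u v = ((ptv.length + 1 : ℕ) : ℕ∞) := by
    rw [← htv, ← hetv]; push_cast; ring
  -- u is not on the path from t to v
  have hu_ptv : u ∉ ptv.support := by
    intro hu
    have h1 : ((ptv.takeUntil u hu).length : ℕ∞) = T.edist t u :=
      IsTree.length_eq_edist hT _ (hptv.takeUntil hu)
    have h2 : ((ptv.dropUntil u hu).length : ℕ∞) = T.edist u v :=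
      IsTree.length_eq_edist hT _ (hptv.dropUntil hu)
    have h3 : ptv.length = (ptv.takeUntil u hu).length + (ptv.dropUntil u hu).length := by
      conv_lhs => rw [← SimpleGraph.Walk.take_spec ptv hu]
      rw [SimpleGraph.Walk.length_append]
    have hl1 : (ptv.takeUntil u hu).length = 1 := by exact_mod_cast h1.trans htu1
    have hl2 : ((ptv.dropUntil u hu).length : ℕ∞) = ((ptv.length + 1 : ℕ) : ℕ∞) :=
      h2.trans huv
    have : (ptv.dropUntil u hu).length = ptv.length + 1 := by exact_mod_cast hl2
    omega
  by_cases ht : t ∈ pwu.support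
  · right
    have h1 : ((pwu.takeUntil t ht).length : ℕ∞) = T.edist w t :=
      IsTree.length_eq_edist hT _ (hpwu.takeUntil ht)
    have h2 : ((pwu.dropUntil t ht).length : ℕ∞) = T.edist t u :=
      IsTree.length_eq_edist hT _ (hpwu.dropUntil ht)
    have h3 : pwu.length = (pwu.takeUntil t ht).length + (pwu.dropUntil t ht).length := by
      conv_lhs => rw [← SimpleGraph.Walk.take_spec pwu ht]
      rw [SimpleGraph.Walk.length_append]
    have hd2 : (pwu.dropUntil t ht).length = 1 := by exact_mod_cast h2.trans htu1
    have hlen : (pwu.takeUntil t ht).length + 1 = pwu.length := by omega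
    have hwt : T.edist w t + 1 = T.edist w u := by
      rw [← h1, ← hewu, ← hlen]; push_cast; ring
    refine ⟨?_, hwt⟩
    intro hEq
    have htri : T.edist w v ≤ T.edist w t + T.edist t v := SimpleGraph.edist_triangle
    rw [hEq, huv, ← h1, ← hetv, ← hewu] at htri
    have : pwu.length + (ptv.length + 1) ≤ (pwu.takeUntil t ht).length + ptv.length := by
      exact_mod_cast htri
    omega
  · left
    have hdisj : ∀ x ∈ pwu.support, x ∉ ptv.support := by
      intro x hx hx'
      have hsub : u ∉ (ptv.takeUntil x hx').support := fun hu =>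
        hu_ptv (SimpleGraph.Walk.support_takeUntil_subset ptv hx' hu)
      have hρ₂ : (SimpleGraph.Walk.cons hadj (ptv.takeUntil x hx')).IsPath :=
        (SimpleGraph.Walk.cons_isPath_iff _ _).2 ⟨hptv.takeUntil hx', hsub⟩
      have hρ₁ : ((pwu.dropUntil x hx).reverse).IsPath := (hpwu.dropUntil hx).reverse
      have hequ : (pwu.dropUntil x hx).reverse = SimpleGraph.Walk.cons hadj (ptv.takeUntil x hx') :=
        (hT.existsUnique_path u x).unique hρ₁ hρ₂
      have htmem : t ∈ ((pwu.dropUntil x hx).reverse).support := by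
        rw [hequ, SimpleGraph.Walk.support_cons]
        exact List.mem_cons_of_mem _ (SimpleGraph.Walk.start_mem_support _)
      rw [SimpleGraph.Walk.support_reverse, List.mem_reverse] at htmem
      exact ht (SimpleGraph.Walk.support_dropUntil_subset pwu hx htmem)
    have hpuv : (SimpleGraph.Walk.cons hadj ptv).IsPath :=
      (SimpleGraph.Walk.cons_isPath_iff _ _).2 ⟨hptv, hu_ptv⟩
    have hω : (pwu.append (SimpleGraph.Walk.cons hadj ptv)).IsPath := by
      rw [SimpleGraph.Walk.isPath_def, SimpleGraph.Walk.support_append, List.nodup_append]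
      refine ⟨hpwu.support_nodup, ?_, ?_⟩
      · rw [SimpleGraph.Walk.support_cons]
        exact (hptv.support_nodup)
      · intro x hx y hy hxy
        subst hxy
        rw [SimpleGraph.Walk.support_cons] at hy
        exact hdisj x hx hy
    have hωt : (pwu.append (SimpleGraph.Walk.cons hadj SimpleGraph.Walk.nil)).IsPath := by
      rw [SimpleGraph.Walk.isPath_def, SimpleGraph.Walk.support_append, List.nodup_append]
      refine ⟨hpwu.support_nodup, ?_, ?_⟩
      · simp
      · intro x hx y hy hxy
        simp only [SimpleGraph.Walk.support_cons, SimpleGraph.Walk.support_nil,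
          List.tail_cons, List.mem_singleton] at hy
        rw [hy] at hxy
        exact ht (hxy ▸ hx)
    have h1 : ((pwu.append (SimpleGraph.Walk.cons hadj ptv)).length : ℕ∞) = T.edist w v :=
      IsTree.length_eq_edist hT _ hω
    have h2 : ((pwu.append (SimpleGraph.Walk.cons hadj SimpleGraph.Walk.nil)).length : ℕ∞) =
        T.edist w t := IsTree.length_eq_edist hT _ hωt
    rw [SimpleGraph.Walk.length_append, SimpleGraph.Walk.length_cons] at h1 h2
    simp only [SimpleGraph.Walk.length_nil] at h2
    constructor
    · rw [← h1, huv, ← hewu]; push_cast; ring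
    · rw [← h2, ← hewu]; push_cast; ring

lemma exists_second_vertex {α : Type} {T : SimpleGraph α} (hT : T.IsTree) {u v : α}
    (hne : u ≠ v) : ∃ t, T.Adj u t ∧ T.edist t v + 1 = T.edist u v := by
  obtain ⟨p, hp, -⟩ := hT.existsUnique_path u v
  cases p with
  | nil => exact absurd rfl hne
  | cons hadj q =>
    have hq : q.IsPath := hp.of_cons
    refine ⟨_, hadj, ?_⟩
    have h1 := IsTree.length_eq_edist hT _ hq
    have h2 := IsTree.length_eq_edist hT _ hp
    rw [← h1, ← h2, SimpleGraph.Walk.length_cons]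
    push_cast
    ring


variable {V : Type}

lemma deleteEdge_connected {G : SimpleGraph V} {x y : V} (h : G.Connected)
    (hxy : G.Adj x y) (hnb : ¬ G.IsBridge s(x, y)) :
    (G \ fromEdgeSet {s(x, y)}).Connected := by
  classical
  have hr : (G \ fromEdgeSet {s(x, y)}).Reachable x y := by
    rw [SimpleGraph.isBridge_iff, not_not] at hnb
    exact hnb
  have base : ∀ a b, G.Adj a b → (G \ fromEdgeSet {s(x, y)}).Reachable a b := by
    intro a b hab
    by_cases he : s(a, b) = s(x, y)
    · rw [Sym2.eq_iff] at he
      rcases he with ⟨rfl, rfl⟩ | ⟨rfl, rfl⟩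
      · exact hr
      · exact hr.symm
    · refine SimpleGraph.Adj.reachable ?_
      rw [SimpleGraph.sdiff_adj, SimpleGraph.fromEdgeSet_adj]
      exact ⟨hab, by simp [he]⟩
  haveI : Nonempty V := h.nonempty
  refine SimpleGraph.Connected.mk ?_
  intro a b
  obtain ⟨w⟩ := h.preconnected a b
  induction w with
  | nil => rfl
  | cons hadj w' ih => exact (base _ _ hadj).trans ih

lemma connected_card_vert_le [Fintype V] :
    ∀ (n : ℕ) (G : SimpleGraph V), G.edgeSet.ncard = n → G.Connected →
      Fintype.card V ≤ n + 1 := by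
  classical
  intro n
  induction n using Nat.strong_induction_on with
  | _ n ih =>
    intro G hn hconn
    haveI : Fintype G.edgeSet := (Set.toFinite _).fintype
    by_cases hac : G.IsAcyclic
    · have htree : G.IsTree := ⟨hconn, hac⟩
      have hc := htree.card_edgeFinset
      have hcard : G.edgeFinset.card = G.edgeSet.ncard := by
        rw [Set.ncard_eq_toFinset_card']; rfl
      omega
    · rw [isAcyclic_iff_forall_adj_isBridge] at hac
      push_neg at hac
      obtain ⟨x, y, hxy, hnb⟩ := hac
      have hconn' := deleteEdge_connected hconn hxy hnb
      have hmem : s(x, y) ∈ G.edgeSet := hxy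
      have hE : (G \ fromEdgeSet {s(x, y)}).edgeSet = G.edgeSet \ {s(x, y)} := by
        rw [SimpleGraph.edgeSet_sdiff, SimpleGraph.edgeSet_fromEdgeSet]
        ext e
        simp only [Set.mem_diff, Set.mem_singleton_iff, Set.mem_setOf_eq]
        constructor
        · rintro ⟨he, hne⟩
          refine ⟨he, fun hee => hne ⟨hee, ?_⟩⟩
          subst hee
          simp [hxy.ne]
        · rintro ⟨he, hne⟩
          exact ⟨he, fun h' => hne h'.1⟩
      have hn' : (G \ fromEdgeSet {s(x, y)}).edgeSet.ncard = n - 1 := by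
        rw [hE, Set.ncard_diff_singleton_of_mem hmem, hn]
      have hpos : 1 ≤ n := by
        rw [← hn]
        exact (Set.ncard_pos (Set.toFinite _)).2 ⟨_, hmem⟩
      have := ih (n - 1) (by omega) _ hn' hconn'
      omega

lemma isTree_of_connected_of_card [Fintype V] (G : SimpleGraph V)
    (hconn : G.Connected) (hcard : G.edgeSet.ncard + 1 = Fintype.card V) : G.IsTree := by
  classical
  refine ⟨hconn, ?_⟩
  by_contra hac
  rw [isAcyclic_iff_forall_adj_isBridge] at hac
  push_neg at hac
  obtain ⟨x, y, hxy, hnb⟩ := hac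
  have hconn' := deleteEdge_connected hconn hxy hnb
  have hmem : s(x, y) ∈ G.edgeSet := hxy
  have hE : (G \ fromEdgeSet {s(x, y)}).edgeSet = G.edgeSet \ {s(x, y)} := by
    rw [SimpleGraph.edgeSet_sdiff, SimpleGraph.edgeSet_fromEdgeSet]
    ext e
    simp only [Set.mem_diff, Set.mem_singleton_iff, Set.mem_setOf_eq]
    constructor
    · rintro ⟨he, hne⟩
      refine ⟨he, fun hee => hne ⟨hee, ?_⟩⟩
      subst hee
      simp [hxy.ne]
    · rintro ⟨he, hne⟩
      exact ⟨he, fun h' => hne h'.1⟩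
  have hn' : (G \ fromEdgeSet {s(x, y)}).edgeSet.ncard = G.edgeSet.ncard - 1 := by
    rw [hE, Set.ncard_diff_singleton_of_mem hmem]
  have hpos : 1 ≤ G.edgeSet.ncard :=
    (Set.ncard_pos (Set.toFinite _)).2 ⟨_, hmem⟩
  have := connected_card_vert_le _ _ hn' hconn'
  omega



lemma edist_le_walk' {α β : Type} {G : SimpleGraph α} {G' : SimpleGraph β} (f : α → β)
    (h : ∀ a b, G.Adj a b → f a = f b ∨ G'.Adj (f a) (f b)) :
    ∀ {a b : α} (p : G.Walk a b), G'.edist (f a) (f b) ≤ p.length := by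
  intro a b p
  induction p with
  | nil => simp [edist_self]
  | cons hadj q ih =>
    rename_i x y z
    rcases h _ _ hadj with he | ha
    · rw [he]
      exact ih.trans (by exact_mod_cast Nat.le_succ _)
    · calc G'.edist (f x) (f z) ≤ G'.edist (f x) (f y) + G'.edist (f y) (f z) :=
            SimpleGraph.edist_triangle
        _ ≤ 1 + q.length := add_le_add (by rw [edist_eq_one_iff_adj.2 ha]) ih
        _ = ((q.length + 1 : ℕ) : ℕ∞) := by push_cast; ring

lemma edist_le_of_forall_adj' {α β : Type} {G : SimpleGraph α} {G' : SimpleGraph β} (f : α → β)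
    (h : ∀ a b, G.Adj a b → f a = f b ∨ G'.Adj (f a) (f b)) (a b : α) :
    G'.edist (f a) (f b) ≤ G.edist a b := by
  rw [SimpleGraph.edist_eq_sInf]
  refine le_sInf ?_
  rintro _ ⟨w, rfl⟩
  exact edist_le_walk' f h w

variable {V₁ V₂ : Type} [DecidableEq V₂]

/-- Map of the second tree into the one-point gluing. -/
def glueMap (r₁ : V₁) (r₂ : V₂) (x : V₂) : V₁ ⊕ {y : V₂ // y ≠ r₂} :=
  if h : x = r₂ then Sum.inl r₁ else Sum.inr ⟨x, h⟩

/-- Two graphs glued at a single vertex. -/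
def glueGraph (T₁ : SimpleGraph V₁) (T₂ : SimpleGraph V₂) (r₁ : V₁) (r₂ : V₂) :
    SimpleGraph (V₁ ⊕ {y : V₂ // y ≠ r₂}) :=
  SimpleGraph.fromRel (fun a b =>
    (∃ x y, T₁.Adj x y ∧ a = Sum.inl x ∧ b = Sum.inl y) ∨
    (∃ x y, T₂.Adj x y ∧ a = glueMap r₁ r₂ x ∧ b = glueMap r₁ r₂ y))

lemma glueMap_injective (r₁ : V₁) (r₂ : V₂) : Function.Injective (glueMap r₁ r₂) := by
  intro x y hxy
  unfold glueMap at hxy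
  by_cases h1 : x = r₂ <;> by_cases h2 : y = r₂
  · rw [h1, h2]
  · rw [dif_pos h1, dif_neg h2] at hxy
    simp at hxy
  · rw [dif_neg h1, dif_pos h2] at hxy
    simp at hxy
  · rw [dif_neg h1, dif_neg h2] at hxy
    simpa using hxy

lemma glue_universal (T₁ : SimpleGraph V₁) (T₂ : SimpleGraph V₂) (r₁ : V₁) (r₂ : V₂) :
    IsIsoUniversalPair T₁ T₂ (glueGraph T₁ T₂ r₁ r₂) := by
  classical
  set G₀ := glueGraph T₁ T₂ r₁ r₂ with hG₀
  have hadj1 : ∀ x y, T₁.Adj x y → G₀.Adj (Sum.inl x) (Sum.inl y) := by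
    intro x y h
    refine ⟨by simp [h.ne], Or.inl (Or.inl ⟨x, y, h, rfl, rfl⟩)⟩
  have hadj2 : ∀ x y, T₂.Adj x y → G₀.Adj (glueMap r₁ r₂ x) (glueMap r₁ r₂ y) := by
    intro x y h
    refine ⟨fun hc => h.ne (glueMap_injective r₁ r₂ hc), Or.inl (Or.inr ⟨x, y, h, rfl, rfl⟩)⟩
  have hπ₁ : ∀ a b, G₀.Adj a b →
      (Sum.elim id (fun _ => r₁)) a = (Sum.elim id (fun _ => r₁)) b ∨
      T₁.Adj ((Sum.elim id (fun _ => r₁)) a) ((Sum.elim id (fun _ => r₁)) b) := by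
    rintro a b ⟨hne, hrel⟩
    have hcase : ∀ c d : V₁ ⊕ {y : V₂ // y ≠ r₂},
        ((∃ x y, T₁.Adj x y ∧ c = Sum.inl x ∧ d = Sum.inl y) ∨
         (∃ x y, T₂.Adj x y ∧ c = glueMap r₁ r₂ x ∧ d = glueMap r₁ r₂ y)) →
        (Sum.elim id (fun _ => r₁)) c = (Sum.elim id (fun _ => r₁)) d ∨
        T₁.Adj ((Sum.elim id (fun _ => r₁)) c) ((Sum.elim id (fun _ => r₁)) d) := by
      rintro c d (⟨x, y, h, rfl, rfl⟩ | ⟨x, y, h, rfl, rfl⟩)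
      · exact Or.inr h
      · left
        unfold glueMap
        split_ifs <;> simp
    rcases hrel with h | h
    · exact hcase _ _ h
    · rcases hcase _ _ h with h' | h'
      · exact Or.inl h'.symm
      · exact Or.inr h'.symm
  have hπ₂ : ∀ a b, G₀.Adj a b →
      (Sum.elim (fun _ => r₂) Subtype.val) a = (Sum.elim (fun _ => r₂) Subtype.val) b ∨
      T₂.Adj ((Sum.elim (fun _ => r₂) Subtype.val) a) ((Sum.elim (fun _ => r₂) Subtype.val) b) := by
    rintro a b ⟨hne, hrel⟩
    have hcase : ∀ c d : V₁ ⊕ {y : V₂ // y ≠ r₂},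
        ((∃ x y, T₁.Adj x y ∧ c = Sum.inl x ∧ d = Sum.inl y) ∨
         (∃ x y, T₂.Adj x y ∧ c = glueMap r₁ r₂ x ∧ d = glueMap r₁ r₂ y)) →
        (Sum.elim (fun _ => r₂) Subtype.val) c = (Sum.elim (fun _ => r₂) Subtype.val) d ∨
        T₂.Adj ((Sum.elim (fun _ => r₂) Subtype.val) c) ((Sum.elim (fun _ => r₂) Subtype.val) d) := by
      rintro c d (⟨x, y, h, rfl, rfl⟩ | ⟨x, y, h, rfl, rfl⟩)
      · exact Or.inl rfl
      · right
        have hx : (Sum.elim (fun _ => r₂) Subtype.val) (glueMap r₁ r₂ x) = x := by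
          unfold glueMap; split_ifs with hh <;> simp [hh]
        have hy : (Sum.elim (fun _ => r₂) Subtype.val) (glueMap r₁ r₂ y) = y := by
          unfold glueMap; split_ifs with hh <;> simp [hh]
        rw [hx, hy]; exact h
    rcases hrel with h | h
    · exact hcase _ _ h
    · rcases hcase _ _ h with h' | h'
      · exact Or.inl h'.symm
      · exact Or.inr h'.symm
  constructor
  · refine ⟨Sum.inl, fun u v h => hadj1 u v h, fun u v => ?_⟩
    refine le_antisymm ?_ (edist_le_of_forall_adj' Sum.inl (fun a b h => Or.inr (hadj1 a b h)) u v)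
    have := edist_le_of_forall_adj' (Sum.elim id (fun _ => r₁)) hπ₁ (Sum.inl u) (Sum.inl v)
    simpa using this
  · refine ⟨glueMap r₁ r₂, fun u v h => hadj2 u v h, fun u v => ?_⟩
    refine le_antisymm ?_
      (edist_le_of_forall_adj' (glueMap r₁ r₂) (fun a b h => Or.inr (hadj2 a b h)) u v)
    have := edist_le_of_forall_adj' (Sum.elim (fun _ => r₂) Subtype.val) hπ₂
      (glueMap r₁ r₂ u) (glueMap r₁ r₂ v)
    have hu : (Sum.elim (fun _ => r₂) Subtype.val) (glueMap r₁ r₂ u) = u := by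
      unfold glueMap; split_ifs with hh <;> simp [hh]
    have hv : (Sum.elim (fun _ => r₂) Subtype.val) (glueMap r₁ r₂ v) = v := by
      unfold glueMap; split_ifs with hh <;> simp [hh]
    rwa [hu, hv] at this



/-- Merging vertex `q` onto vertex `p`. -/
def mergeGraph {α : Type} (U : SimpleGraph α) (p q : α) : SimpleGraph {w : α // w ≠ q} :=
  SimpleGraph.fromRel (fun a b =>
    U.Adj a.1 b.1 ∨ (a.1 = p ∧ U.Adj q b.1) ∨ (b.1 = p ∧ U.Adj a.1 q))

lemma mergeGraph_adj {α : Type} {U : SimpleGraph α} {p q : α} {a b : {w : α // w ≠ q}} :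
    (mergeGraph U p q).Adj a b ↔ a ≠ b ∧
      (U.Adj a.1 b.1 ∨ (a.1 = p ∧ U.Adj q b.1) ∨ (b.1 = p ∧ U.Adj a.1 q)) := by
  unfold mergeGraph
  rw [SimpleGraph.fromRel_adj]
  constructor
  · rintro ⟨hne, h | h⟩
    · exact ⟨hne, h⟩
    · refine ⟨hne, ?_⟩
      rcases h with h | ⟨h1, h2⟩ | ⟨h1, h2⟩
      · exact Or.inl h.symm
      · exact Or.inr (Or.inr ⟨h1, h2.symm⟩)
      · exact Or.inr (Or.inl ⟨h1, h2.symm⟩)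
  · rintro ⟨hne, h⟩
    exact ⟨hne, Or.inl h⟩

lemma merge_walk_bound {α : Type} {U : SimpleGraph α} {p q : α} {a b : {w : α // w ≠ q}}
    (ω : (mergeGraph U p q).Walk a b) :
    (U.edist a.1 b.1 ≤ ω.length) ∨
    (∃ l₁, (l₁ = p ∨ l₁ = q) ∧ ∃ l₂, (l₂ = p ∨ l₂ = q) ∧
      U.edist a.1 l₁ + U.edist l₂ b.1 ≤ ω.length) := by
  induction ω with
  | nil => left; simp [edist_self]
  | cons hadj ω' ih =>
    rename_i x y z
    have hmm := hadj
    rw [mergeGraph_adj] at hmm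
    obtain ⟨hne, hcase⟩ := hmm
    simp only [SimpleGraph.Walk.length_cons, Nat.cast_add, Nat.cast_one]
    rcases hcase with hxy | ⟨hxp, hqy⟩ | ⟨hyp, hxq⟩
    · rcases ih with h | ⟨l₁, hl₁, l₂, hl₂, h⟩
      · left
        calc U.edist x.1 z.1 ≤ U.edist x.1 y.1 + U.edist y.1 z.1 := SimpleGraph.edist_triangle
          _ ≤ 1 + ω'.length := add_le_add (by rw [edist_eq_one_iff_adj.2 hxy]) h
          _ = ((ω'.length : ℕ∞) + 1) := by ring
      · right
        refine ⟨l₁, hl₁, l₂, hl₂, ?_⟩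
        calc U.edist x.1 l₁ + U.edist l₂ z.1
            ≤ (U.edist x.1 y.1 + U.edist y.1 l₁) + U.edist l₂ z.1 :=
              add_le_add_left SimpleGraph.edist_triangle _ 
          _ ≤ (1 + U.edist y.1 l₁) + U.edist l₂ z.1 := by
              gcongr
              rw [edist_eq_one_iff_adj.2 hxy]
          _ = 1 + (U.edist y.1 l₁ + U.edist l₂ z.1) := by ring
          _ ≤ 1 + ω'.length := by gcongr
          _ = ((ω'.length : ℕ∞) + 1) := by ring
    · right
      rcases ih with h | ⟨l₁, hl₁, l₂, hl₂, h⟩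
      · refine ⟨p, Or.inl rfl, q, Or.inr rfl, ?_⟩
        rw [hxp]
        calc U.edist p p + U.edist q z.1 ≤ 0 + (U.edist q y.1 + U.edist y.1 z.1) := by
              rw [SimpleGraph.edist_self]
              exact add_le_add_right SimpleGraph.edist_triangle _
          _ ≤ 0 + (1 + ω'.length) := by
              gcongr
              rw [edist_eq_one_iff_adj.2 hqy]
          _ = ((ω'.length : ℕ∞) + 1) := by ring
      · refine ⟨p, Or.inl rfl, l₂, hl₂, ?_⟩
        rw [hxp, SimpleGraph.edist_self]
        calc 0 + U.edist l₂ z.1 ≤ U.edist y.1 l₁ + U.edist l₂ z.1 := by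
              gcongr; exact zero_le
          _ ≤ ω'.length := h
          _ ≤ (ω'.length : ℕ∞) + 1 := le_self_add
    · right
      rcases ih with h | ⟨l₁, hl₁, l₂, hl₂, h⟩
      · refine ⟨q, Or.inr rfl, p, Or.inl rfl, ?_⟩
        rw [hyp] at h
        calc U.edist x.1 q + U.edist p z.1 ≤ 1 + ω'.length := by
              gcongr
              rw [edist_eq_one_iff_adj.2 hxq]
          _ = ((ω'.length : ℕ∞) + 1) := by ring
      · refine ⟨q, Or.inr rfl, l₂, hl₂, ?_⟩
        calc U.edist x.1 q + U.edist l₂ z.1 ≤ 1 + (U.edist y.1 l₁ + U.edist l₂ z.1) := by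
              gcongr
              · rw [edist_eq_one_iff_adj.2 hxq]
              · exact le_add_self
          _ ≤ 1 + ω'.length := by gcongr
          _ = ((ω'.length : ℕ∞) + 1) := by ring

/-- If `p` and `q` can be merged without changing distances within the two embedded
trees, the merged graph is still isometric-universal. -/
lemma merge_universal {V₁ V₂ W : Type} {T₁ : SimpleGraph V₁} {T₂ : SimpleGraph V₂}
    {U : SimpleGraph W} {φ₁ : V₁ → W} {φ₂ : V₂ → W}
    (hem₁ : IsIsometricEmbedding T₁ U φ₁) (hem₂ : IsIsometricEmbedding T₂ U φ₂)
    {p₁ q₁ : W} (hpq : p₁ ≠ q₁)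
    (hcut : ∀ x y, U.Adj x y →
      (x ∈ Set.range φ₁ ∧ y ∈ Set.range φ₁) ∨ (x ∈ Set.range φ₂ ∧ y ∈ Set.range φ₂))
    (hE₁ : ∀ a ∈ Set.range φ₁, U.edist a p₁ ≤ U.edist a q₁)
    (hE₂ : ∀ b ∈ Set.range φ₂, U.edist b q₁ ≤ U.edist b p₁)
    (hqA : q₁ ∉ Set.range φ₁) (hpB : p₁ ∉ Set.range φ₂) :
    IsIsoUniversalPair T₁ T₂ (mergeGraph U p₁ q₁) := by
  classical
  obtain ⟨hφ₁a, hφ₁d⟩ := hem₁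
  obtain ⟨hφ₂a, hφ₂d⟩ := hem₂
  set ψ : W → {w : W // w ≠ q₁} := fun w => if h : w = q₁ then ⟨p₁, hpq⟩ else ⟨w, h⟩ with hψ
  have hψval : ∀ w, w ≠ q₁ → (ψ w).1 = w := by
    intro w hw; simp [hψ, dif_neg hw]
  have hψq : (ψ q₁).1 = p₁ := by simp [hψ]
  have hψhom : ∀ x y, U.Adj x y → (mergeGraph U p₁ q₁).Adj (ψ x) (ψ y) := by
    intro x y hxy
    rw [mergeGraph_adj]
    by_cases hx : x = q₁
    · subst hx
      have hy := hxy.ne'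
      have hyB : y ∈ Set.range φ₂ := by
        rcases hcut _ _ hxy with ⟨hA, -⟩ | ⟨-, hB⟩
        · exact absurd hA hqA
        · exact hB
      have hne : p₁ ≠ y := fun h => hpB (h ▸ hyB)
      refine ⟨?_, Or.inr (Or.inl ⟨hψq, by rwa [hψval y hy]⟩)⟩
      intro hc
      apply hne
      have := congrArg Subtype.val hc
      rwa [hψq, hψval y hy] at this
    · by_cases hy : y = q₁
      · subst hy
        have hxB : x ∈ Set.range φ₂ := by
          rcases hcut _ _ hxy with ⟨-, hA'⟩ | ⟨hB, -⟩
          · exact absurd hA' hqA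
          · exact hB
        have hne : x ≠ p₁ := fun h => hpB (h ▸ hxB)
        refine ⟨?_, Or.inr (Or.inr ⟨hψq, by rwa [hψval x hx]⟩)⟩
        intro hc
        apply hne
        have := congrArg Subtype.val hc
        rw [hψq, hψval x hx] at this
        exact this
      · refine ⟨?_, Or.inl (by rwa [hψval x hx, hψval y hy])⟩
        intro hc
        apply hxy.ne
        have := congrArg Subtype.val hc
        rwa [hψval x hx, hψval y hy] at this
  have hle : ∀ x y : W, (mergeGraph U p₁ q₁).edist (ψ x) (ψ y) ≤ U.edist x y :=
    edist_le_of_forall_adj' ψ (fun a b h => Or.inr (hψhom a b h))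
  constructor
  · -- embedding of T₁
    refine ⟨ψ ∘ φ₁, fun a b h => hψhom _ _ (hφ₁a a b h), fun a b => ?_⟩
    simp only [Function.comp_apply]
    have hxa : φ₁ a ≠ q₁ := fun h => hqA (h ▸ Set.mem_range_self a)
    have hxb : φ₁ b ≠ q₁ := fun h => hqA (h ▸ Set.mem_range_self b)
    have h1 : (mergeGraph U p₁ q₁).edist (ψ (φ₁ a)) (ψ (φ₁ b)) ≤ T₁.edist a b :=
      (hle (φ₁ a) (φ₁ b)).trans_eq (hφ₁d a b).symm
    refine le_antisymm ?_ h1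
    rw [hφ₁d a b]
    by_cases hreach : (mergeGraph U p₁ q₁).Reachable (ψ (φ₁ a)) (ψ (φ₁ b))
    · obtain ⟨ω, hω⟩ := hreach.exists_walk_length_eq_edist
      rw [← hω]
      rcases merge_walk_bound ω with h | ⟨l₁, hl₁, l₂, hl₂, h⟩
      · rwa [hψval _ hxa, hψval _ hxb] at h
      · rw [hψval _ hxa, hψval _ hxb] at h
        have h₁ : U.edist (φ₁ a) p₁ ≤ U.edist (φ₁ a) l₁ := by
          rcases hl₁ with rfl | rfl
          · exact le_refl _
          · exact hE₁ _ (Set.mem_range_self a)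
        have h₂ : U.edist p₁ (φ₁ b) ≤ U.edist l₂ (φ₁ b) := by
          rcases hl₂ with rfl | rfl
          · exact le_refl _
          · rw [SimpleGraph.edist_comm, SimpleGraph.edist_comm (u := l₂)]
            exact hE₁ _ (Set.mem_range_self b)
        calc U.edist (φ₁ a) (φ₁ b) ≤ U.edist (φ₁ a) p₁ + U.edist p₁ (φ₁ b) :=
              SimpleGraph.edist_triangle
          _ ≤ U.edist (φ₁ a) l₁ + U.edist l₂ (φ₁ b) := add_le_add h₁ h₂
          _ ≤ ω.length := h
    · rw [SimpleGraph.edist_eq_top_of_not_reachable hreach]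
      exact le_top
  · -- embedding of T₂
    refine ⟨ψ ∘ φ₂, fun a b h => hψhom _ _ (hφ₂a a b h), fun a b => ?_⟩
    simp only [Function.comp_apply]
    have h1 : (mergeGraph U p₁ q₁).edist (ψ (φ₂ a)) (ψ (φ₂ b)) ≤ T₂.edist a b :=
      (hle (φ₂ a) (φ₂ b)).trans_eq (hφ₂d a b).symm
    refine le_antisymm ?_ h1
    rw [hφ₂d a b]
    by_cases hreach : (mergeGraph U p₁ q₁).Reachable (ψ (φ₂ a)) (ψ (φ₂ b))
    · obtain ⟨ω, hω⟩ := hreach.exists_walk_length_eq_edist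
      rw [← hω]
      rcases merge_walk_bound ω with h | ⟨l₁, hl₁, l₂, hl₂, h⟩
      · by_cases ha' : φ₂ a = q₁
        · have hva : (ψ (φ₂ a)).1 = p₁ := by rw [ha']; exact hψq
          by_cases hb' : φ₂ b = q₁
          · calc U.edist (φ₂ a) (φ₂ b) = U.edist q₁ q₁ := by rw [ha', hb']
              _ = 0 := SimpleGraph.edist_self
              _ ≤ _ := zero_le
          · rw [hψval _ hb', hva] at h
            calc U.edist (φ₂ a) (φ₂ b) = U.edist (φ₂ b) q₁ := by
                  rw [ha', SimpleGraph.edist_comm]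
              _ ≤ U.edist (φ₂ b) p₁ := hE₂ _ (Set.mem_range_self b)
              _ = U.edist p₁ (φ₂ b) := SimpleGraph.edist_comm
              _ ≤ _ := h
        · by_cases hb' : φ₂ b = q₁
          · have hvb : (ψ (φ₂ b)).1 = p₁ := by rw [hb']; exact hψq
            rw [hψval _ ha', hvb] at h
            calc U.edist (φ₂ a) (φ₂ b) = U.edist (φ₂ a) q₁ := by rw [hb']
              _ ≤ U.edist (φ₂ a) p₁ := hE₂ _ (Set.mem_range_self a)
              _ ≤ _ := h
          · rwa [hψval _ ha', hψval _ hb'] at h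
      · have hA : U.edist (φ₂ a) q₁ ≤ U.edist (ψ (φ₂ a)).1 l₁ := by
          by_cases ha' : φ₂ a = q₁
          · calc U.edist (φ₂ a) q₁ = U.edist q₁ q₁ := by rw [ha']
              _ = 0 := SimpleGraph.edist_self
              _ ≤ _ := zero_le
          · rw [hψval _ ha']
            rcases hl₁ with rfl | rfl
            · exact hE₂ _ (Set.mem_range_self a)
            · exact le_refl _
        have hB : U.edist q₁ (φ₂ b) ≤ U.edist l₂ (ψ (φ₂ b)).1 := by
          by_cases hb' : φ₂ b = q₁
          · calc U.edist q₁ (φ₂ b) = U.edist q₁ q₁ := by rw [hb']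
              _ = 0 := SimpleGraph.edist_self
              _ ≤ _ := zero_le
          · rw [hψval _ hb']
            rcases hl₂ with rfl | rfl
            · rw [SimpleGraph.edist_comm, SimpleGraph.edist_comm (u := l₂)]
              exact hE₂ _ (Set.mem_range_self b)
            · exact le_refl _
        calc U.edist (φ₂ a) (φ₂ b) ≤ U.edist (φ₂ a) q₁ + U.edist q₁ (φ₂ b) :=
              SimpleGraph.edist_triangle
          _ ≤ U.edist (ψ (φ₂ a)).1 l₁ + U.edist l₂ (ψ (φ₂ b)).1 := add_le_add hA hB
          _ ≤ ω.length := h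
    · rw [SimpleGraph.edist_eq_top_of_not_reachable hreach]
      exact le_top


end StmtAux

section MainProof

open StmtAux

/-- If `U` is a minimum and minimal isometric-universal graph for a
pair of finite trees `{T₁, T₂}`, then `U` is a tree. -/
theorem stmt_0 {V₁ V₂ W : Type} [Fintype V₁] [Fintype V₂] [Fintype W]
    (T₁ : SimpleGraph V₁) (T₂ : SimpleGraph V₂) (U : SimpleGraph W)
    (hT₁ : T₁.IsTree) (hT₂ : T₂.IsTree)
    (hU : IsIsoUniversalPair T₁ T₂ U)
    (hmin : ∀ (W' : Type) (_ : Finite W') (U' : SimpleGraph W'),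
      IsIsoUniversalPair T₁ T₂ U' → Nat.card W ≤ Nat.card W')
    (hminimal : ∀ H : U.Subgraph, H ≠ ⊤ → ¬ IsIsoUniversalPair T₁ T₂ H.coe) :
    U.IsTree := by
  classical
  obtain ⟨⟨φ₁, hφ₁a, hφ₁d⟩, ⟨φ₂, hφ₂a, hφ₂d⟩⟩ := hU
  haveI hne₁ : Nonempty V₁ := hT₁.isConnected.nonempty
  haveI hne₂ : Nonempty V₂ := hT₂.isConnected.nonempty
  haveI hneW : Nonempty W := ⟨φ₁ (Classical.arbitrary V₁)⟩
  have hinj₁ : Function.Injective φ₁ := by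
    intro a b h
    have hd := hφ₁d a b
    rw [h, SimpleGraph.edist_self] at hd
    exact SimpleGraph.edist_eq_zero_iff.1 hd
  have hinj₂ : Function.Injective φ₂ := by
    intro a b h
    have hd := hφ₂d a b
    rw [h, SimpleGraph.edist_self] at hd
    exact SimpleGraph.edist_eq_zero_iff.1 hd
  set A : Set W := Set.range φ₁ with hA
  set B : Set W := Set.range φ₂ with hB
  set E1 : W → W → Prop := fun x y => ∃ a b, T₁.Adj a b ∧ φ₁ a = x ∧ φ₁ b = y with hE1
  set E2 : W → W → Prop := fun x y => ∃ a b, T₂.Adj a b ∧ φ₂ a = x ∧ φ₂ b = y with hE2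
  have hE1adj : ∀ x y, E1 x y → U.Adj x y := by
    rintro x y ⟨a, b, h, rfl, rfl⟩
    exact hφ₁a a b h
  have hE2adj : ∀ x y, E2 x y → U.Adj x y := by
    rintro x y ⟨a, b, h, rfl, rfl⟩
    exact hφ₂a a b h
  -- The union of the images is all of U, by minimality.
  set Hsub : U.Subgraph :=
    { verts := A ∪ B
      Adj := fun x y => E1 x y ∨ E2 x y
      adj_sub := by
        rintro x y (h | h)
        · exact hE1adj x y h
        · exact hE2adj x y h
      edge_vert := by
        rintro x y (⟨a, b, h, rfl, rfl⟩ | ⟨a, b, h, rfl, rfl⟩)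
        · exact Or.inl ⟨a, rfl⟩
        · exact Or.inr ⟨a, rfl⟩
      symm := by
        refine ⟨?_⟩
        rintro x y (⟨a, b, h, rfl, rfl⟩ | ⟨a, b, h, rfl, rfl⟩)
        · exact Or.inl ⟨b, a, h.symm, rfl, rfl⟩
        · exact Or.inr ⟨b, a, h.symm, rfl, rfl⟩ } with hHsub
  have hHuniv : IsIsoUniversalPair T₁ T₂ Hsub.coe := by
    constructor
    · refine ⟨fun a => ⟨φ₁ a, Or.inl ⟨a, rfl⟩⟩, fun a b h => ?_, fun a b => ?_⟩
      · exact Or.inl ⟨a, b, h, rfl, rfl⟩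
      · refine le_antisymm ?_ ?_
        · calc T₁.edist a b = U.edist (φ₁ a) (φ₁ b) := hφ₁d a b
            _ ≤ _ := edist_le_of_forall_adj' (Subtype.val)
                (fun x y h => Or.inr (Hsub.adj_sub h)) _ _
        · exact edist_le_of_forall_adj' (fun a => (⟨φ₁ a, Or.inl ⟨a, rfl⟩⟩ : Hsub.verts))
            (fun x y h => Or.inr (Or.inl ⟨x, y, h, rfl, rfl⟩)) a b
    · refine ⟨fun a => ⟨φ₂ a, Or.inr ⟨a, rfl⟩⟩, fun a b h => ?_, fun a b => ?_⟩
      · exact Or.inr ⟨a, b, h, rfl, rfl⟩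
      · refine le_antisymm ?_ ?_
        · calc T₂.edist a b = U.edist (φ₂ a) (φ₂ b) := hφ₂d a b
            _ ≤ _ := edist_le_of_forall_adj' (Subtype.val)
                (fun x y h => Or.inr (Hsub.adj_sub h)) _ _
        · exact edist_le_of_forall_adj' (fun a => (⟨φ₂ a, Or.inr ⟨a, rfl⟩⟩ : Hsub.verts))
            (fun x y h => Or.inr (Or.inr ⟨x, y, h, rfl, rfl⟩)) a b
  have hHtop : Hsub = ⊤ := by
    by_contra hne
    exact hminimal Hsub hne hHuniv
  have hcover : A ∪ B = Set.univ := by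
    have := congrArg SimpleGraph.Subgraph.verts hHtop
    simpa [hHsub] using this
  have hedge : ∀ x y, U.Adj x y → E1 x y ∨ E2 x y := by
    intro x y h
    have : Hsub.Adj x y := by rw [hHtop]; exact h
    exact this
  have hcut : ∀ x y, U.Adj x y → (x ∈ A ∧ y ∈ A) ∨ (x ∈ B ∧ y ∈ B) := by
    intro x y h
    rcases hedge x y h with ⟨a, b, hab, rfl, rfl⟩ | ⟨a, b, hab, rfl, rfl⟩
    · exact Or.inl ⟨⟨a, rfl⟩, ⟨b, rfl⟩⟩
    · exact Or.inr ⟨⟨a, rfl⟩, ⟨b, rfl⟩⟩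
  -- minimum order bound from the one-point gluing
  have hglue := hmin _ inferInstance _
    (StmtAux.glue_universal T₁ T₂ (Classical.arbitrary V₁) (Classical.arbitrary V₂))
  have hcard_glue : Nat.card (V₁ ⊕ {y : V₂ // y ≠ Classical.arbitrary V₂}) =
      Fintype.card V₁ + (Fintype.card V₂ - 1) := by
    rw [Nat.card_sum, Nat.card_eq_fintype_card, Nat.card_eq_fintype_card]
    congr 1
    have h1 : Fintype.card {y : V₂ // ¬ (y = Classical.arbitrary V₂)} =
        Fintype.card V₂ - Fintype.card {y : V₂ // y = Classical.arbitrary V₂} :=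
      Fintype.card_subtype_compl _
    rw [Fintype.card_subtype_eq] at h1
    exact h1
  have hWle : Fintype.card W ≤ Fintype.card V₁ + (Fintype.card V₂ - 1) := by
    rw [← hcard_glue, ← Nat.card_eq_fintype_card]
    exact hglue
  -- cardinalities of ranges
  have hAcard : A.ncard = Fintype.card V₁ := by
    rw [hA, ← Set.image_univ, Set.ncard_image_of_injective _ hinj₁, Set.ncard_univ,
      Nat.card_eq_fintype_card]
  have hBcard : B.ncard = Fintype.card V₂ := by
    rw [hB, ← Set.image_univ, Set.ncard_image_of_injective _ hinj₂, Set.ncard_univ,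
      Nat.card_eq_fintype_card]
  have hVcard : Fintype.card W + (A ∩ B).ncard = Fintype.card V₁ + Fintype.card V₂ := by
    have := Set.ncard_union_add_ncard_inter A B
    rwa [hcover, Set.ncard_univ, Nat.card_eq_fintype_card, hAcard, hBcard] at this
  have hV₂pos : 1 ≤ Fintype.card V₂ := Fintype.card_pos
  have hXne : (A ∩ B).Nonempty := by
    rw [← Set.ncard_pos (Set.toFinite _)]
    omega
  -- connectivity of U
  have hUconn : U.Connected := by
    obtain ⟨z, hzA, hzB⟩ := hXne
    obtain ⟨a₀, hza⟩ := hzA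
    obtain ⟨b₀, hzb⟩ := hzB
    let hom₁ : T₁ →g U := ⟨φ₁, fun h => hφ₁a _ _ h⟩
    let hom₂ : T₂ →g U := ⟨φ₂, fun h => hφ₂a _ _ h⟩
    have hreach : ∀ x : W, U.Reachable x z := by
      intro x
      have hx : x ∈ A ∪ B := hcover ▸ Set.mem_univ x
      rcases hx with ⟨a, rfl⟩ | ⟨b, rfl⟩
      · have : U.Reachable (φ₁ a) (φ₁ a₀) :=
          SimpleGraph.Reachable.map hom₁ (hT₁.isConnected a a₀)
        rwa [hza] at this
      · have : U.Reachable (φ₂ b) (φ₂ b₀) :=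
          SimpleGraph.Reachable.map hom₂ (hT₂.isConnected b b₀)
        rwa [hzb] at this
    exact ⟨fun x y => (hreach x).trans (hreach y).symm⟩
  have hcast : ∀ x y : W, (U.dist x y : ℕ∞) = U.edist x y := fun x y =>
    ENat.coe_toNat (SimpleGraph.edist_ne_top_iff_reachable.2 (hUconn.preconnected x y))
  -- the common subgraph
  set Kv : Set W := A ∩ B with hKv
  have hadj_comm : ∀ x y, x ∈ Kv → y ∈ Kv → U.Adj x y → (E1 x y ∧ E2 x y) := by
    rintro x y ⟨⟨a, rfl⟩, ⟨c, hc⟩⟩ ⟨⟨b, hb'⟩, ⟨d, hd'⟩⟩ hxy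
    have hd1 : U.edist (φ₁ a) (φ₁ b) = 1 := by
      rw [hb']; exact SimpleGraph.edist_eq_one_iff_adj.2 hxy
    have hd2 : U.edist (φ₂ c) (φ₂ d) = 1 := by
      rw [hc, hd']; exact SimpleGraph.edist_eq_one_iff_adj.2 hxy
    constructor
    · refine ⟨a, b, ?_, rfl, hb'⟩
      exact SimpleGraph.edist_eq_one_iff_adj.1 ((hφ₁d a b).trans hd1)
    · refine ⟨c, d, ?_, hc, hd'⟩
      exact SimpleGraph.edist_eq_one_iff_adj.1 ((hφ₂d c d).trans hd2)
  set KS : SimpleGraph ↥Kv :=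
    { Adj := fun a b => E1 a.1 b.1 ∧ E2 a.1 b.1
      symm := by
        refine ⟨?_⟩
        rintro a b ⟨⟨x, y, h, hx, hy⟩, ⟨x', y', h', hx', hy'⟩⟩
        exact ⟨⟨y, x, h.symm, hy, hx⟩, ⟨y', x', h'.symm, hy', hx'⟩⟩
      loopless := by
        refine ⟨?_⟩
        rintro a ⟨h1, -⟩
        exact (hE1adj _ _ h1).ne rfl } with hKS
  -- Step C : KS is preconnected
  have hKpre : ∀ x y : ↥Kv, KS.Reachable x y := by
    by_contra hcon
    push_neg at hcon
    obtain ⟨x₀, y₀, hxy₀⟩ := hcon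
    have hPex : ∃ n : ℕ, ∃ x y : ↥Kv, ¬KS.Reachable x y ∧ U.dist x.1 y.1 = n :=
      ⟨_, x₀, y₀, hxy₀, rfl⟩
    obtain ⟨u', v', huv, hd⟩ := Nat.find_spec hPex
    have hdmin : ∀ m, m < Nat.find hPex →
        ∀ x y : ↥Kv, ¬KS.Reachable x y → U.dist x.1 y.1 ≠ m := by
      intro m hm x y hr he
      exact Nat.find_min hPex hm ⟨x, y, hr, he⟩
    set d : ℕ := Nat.find hPex with hdd
    set u : W := u'.1
    set v : W := v'.1
    have hed : U.edist u v = (d : ℕ∞) := by rw [← hcast, hd]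
    -- d ≥ 2
    have hune : u ≠ v := by
      intro h
      apply huv
      have : u' = v' := Subtype.ext h
      rw [this]
    have hd2 : 2 ≤ d := by
      rcases Nat.lt_or_ge d 2 with h | h
      · interval_cases d
        · exfalso
          apply hune
          have := hed
          rw [Nat.cast_zero] at this
          exact SimpleGraph.edist_eq_zero_iff.1 this
        · exfalso
          have hadj : U.Adj u v := by
            rw [← SimpleGraph.edist_eq_one_iff_adj, hed, Nat.cast_one]
          have := hadj_comm u v u'.2 v'.2 hadj
          exact huv (SimpleGraph.Adj.reachable this)
      · exact h
    -- preimages of u and v in both trees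
    obtain ⟨u₁, hu₁⟩ := u'.2.1
    obtain ⟨u₂, hu₂⟩ := u'.2.2
    obtain ⟨v₁, hv₁⟩ := v'.2.1
    obtain ⟨v₂, hv₂⟩ := v'.2.2
    have hu₁ : φ₁ u₁ = u := hu₁
    have hu₂ : φ₂ u₂ = u := hu₂
    have hv₁ : φ₁ v₁ = v := hv₁
    have hv₂ : φ₂ v₂ = v := hv₂
    have hne₁' : u₁ ≠ v₁ := fun h => hune (by rw [← hu₁, ← hv₁, h])
    have hne₂' : u₂ ≠ v₂ := fun h => hune (by rw [← hu₂, ← hv₂, h])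
    obtain ⟨t₁, hadj₁, hdist₁⟩ := exists_second_vertex hT₁ hne₁'
    obtain ⟨t₂, hadj₂, hdist₂⟩ := exists_second_vertex hT₂ hne₂'
    set p₁ : W := φ₁ t₁ with hp₁def
    set q₁ : W := φ₂ t₂ with hq₁def
    have hp₁A : p₁ ∈ A := ⟨t₁, rfl⟩
    have hq₁B : q₁ ∈ B := ⟨t₂, rfl⟩
    have hadj_up : U.Adj u p₁ := by rw [← hu₁]; exact hφ₁a _ _ hadj₁
    have hadj_uq : U.Adj u q₁ := by rw [← hu₂]; exact hφ₂a _ _ hadj₂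
    have hpv : U.edist p₁ v + 1 = U.edist u v := by
      have e1 : T₁.edist t₁ v₁ = U.edist p₁ v := by rw [hφ₁d, hv₁]
      have e2 : T₁.edist u₁ v₁ = U.edist u v := by rw [hφ₁d, hu₁, hv₁]
      rw [← e1, ← e2]
      exact hdist₁
    have hqv : U.edist q₁ v + 1 = U.edist u v := by
      have e1 : T₂.edist t₂ v₂ = U.edist q₁ v := by rw [hφ₂d, hv₂]
      have e2 : T₂.edist u₂ v₂ = U.edist u v := by rw [hφ₂d, hu₂, hv₂]
      rw [← e1, ← e2]
      exact hdist₂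
    -- if a neighbour of u in the intersection, we would contradict minimality of d
    have hmid : ∀ m : W, m ∈ Kv → U.Adj u m → U.edist m v + 1 = U.edist u v → False := by
      intro m hmK hadj_um hmv
      have hKadj : KS.Adj u' ⟨m, hmK⟩ := hadj_comm u m u'.2 hmK hadj_um
      have hur : ¬ KS.Reachable ⟨m, hmK⟩ v' := fun hr =>
        huv ((SimpleGraph.Adj.reachable hKadj).trans hr)
      have hnat : U.dist m v + 1 = d := by
        have : ((U.dist m v : ℕ) : ℕ∞) + 1 = ((d : ℕ) : ℕ∞) := by
          rw [hcast, ← hed]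
          exact hmv
        exact_mod_cast this
      refine hdmin (d - 1) (by omega) ⟨m, hmK⟩ v' hur ?_
      show U.dist m v = d - 1
      omega
    have hp₁B : p₁ ∉ B := fun hpB => hmid p₁ ⟨hp₁A, hpB⟩ hadj_up hpv
    have hq₁A : q₁ ∉ A := fun hqA => hmid q₁ ⟨hqA, hq₁B⟩ hadj_uq hqv
    have hpq : p₁ ≠ q₁ := fun h => hp₁B (h ▸ hq₁B)
    -- Claim C : every vertex of the intersection is equidistant from p₁ and q₁
    have hC : ∀ w, w ∈ A → w ∈ B → U.edist w p₁ = U.edist w q₁ := by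
      intro w hwA hwB
      obtain ⟨w₁, hw₁⟩ := hwA
      obtain ⟨w₂, hw₂⟩ := hwB
      have tri1 := tree_trichotomy hT₁ hadj₁ hdist₁ w₁
      have tri2 := tree_trichotomy hT₂ hadj₂ hdist₂ w₂
      have k1 : T₁.edist w₁ u₁ = U.edist w u := by rw [hφ₁d, hw₁, hu₁]
      have k2 : T₁.edist w₁ v₁ = U.edist w v := by rw [hφ₁d, hw₁, hv₁]
      have k3 : T₁.edist u₁ v₁ = U.edist u v := by rw [hφ₁d, hu₁, hv₁]
      have k4 : T₁.edist w₁ t₁ = U.edist w p₁ := by rw [hφ₁d, hw₁]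
      have l1 : T₂.edist w₂ u₂ = U.edist w u := by rw [hφ₂d, hw₂, hu₂]
      have l2 : T₂.edist w₂ v₂ = U.edist w v := by rw [hφ₂d, hw₂, hv₂]
      have l3 : T₂.edist u₂ v₂ = U.edist u v := by rw [hφ₂d, hu₂, hv₂]
      have l4 : T₂.edist w₂ t₂ = U.edist w q₁ := by rw [hφ₂d, hw₂]
      rw [k1, k2, k3, k4] at tri1
      rw [l1, l2, l3, l4] at tri2
      rcases tri1 with ⟨c1, e1⟩ | ⟨c1, e1⟩ <;> rcases tri2 with ⟨c2, e2⟩ | ⟨c2, e2⟩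
      · rw [e1, e2]
      · exact absurd c1 c2
      · exact absurd c2 c1
      · exact WithTop.add_right_cancel (by exact ENat.one_ne_top) (e1.trans e2.symm)
    have hE₁ : ∀ a ∈ A, U.edist a p₁ ≤ U.edist a q₁ :=
      fun a ha => cut_edist_le hcut (fun w hwA hwB => hC w hwA hwB) hq₁A ha
    have hE₂ : ∀ b ∈ B, U.edist b q₁ ≤ U.edist b p₁ :=
      fun b hb => cut_edist_le (fun x y h => (hcut x y h).symm)
        (fun w hwB hwA => (hC w hwA hwB).symm) hp₁B hb
    have huniv' := merge_universal (T₁ := T₁) (T₂ := T₂) ⟨hφ₁a, hφ₁d⟩ ⟨hφ₂a, hφ₂d⟩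
      hpq hcut hE₁ hE₂ hq₁A hp₁B
    have hmin' := hmin _ inferInstance _ huniv'
    have hc1 : Nat.card {w : W // w ≠ q₁} = Fintype.card W - 1 := by
      rw [Nat.card_eq_fintype_card]
      have h1 : Fintype.card {w : W // ¬ (w = q₁)} =
          Fintype.card W - Fintype.card {w : W // w = q₁} := Fintype.card_subtype_compl _
      rw [Fintype.card_subtype_eq] at h1
      exact h1
    have hWpos : 1 ≤ Fintype.card W := Fintype.card_pos
    rw [Nat.card_eq_fintype_card, hc1] at hmin'
    omega
  -- KS is a tree
  haveI : Nonempty ↥Kv := hXne.to_subtype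
  have hKconn : KS.Connected := SimpleGraph.Connected.mk (fun x y => hKpre x y)
  have hι : ∀ x : ↥Kv, φ₁ (Function.invFun φ₁ x.1) = x.1 := by
    intro x
    obtain ⟨a, ha⟩ := x.2.1
    exact Function.invFun_eq ⟨a, ha⟩
  have hKac : KS.IsAcyclic := by
    intro vtx c hc
    let f : ↥Kv → V₁ := fun x => Function.invFun φ₁ x.1
    have hι' : ∀ x : ↥Kv, φ₁ (f x) = x.1 := fun x => hι x
    have hfadj : ∀ {x y : ↥Kv}, KS.Adj x y → T₁.Adj (f x) (f y) := by
      rintro x y ⟨⟨a, b, hab, hax, hby⟩, -⟩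
      have hxa : f x = a := hinj₁ (by rw [hι' x, ← hax])
      have hyb : f y = b := hinj₁ (by rw [hι' y, ← hby])
      rw [hxa, hyb]
      exact hab
    have hfinj : Function.Injective f := by
      intro x y h
      apply Subtype.ext
      rw [← hι' x, ← hι' y, h]
    exact hT₁.2 (c.map ⟨f, hfadj⟩)
      ((SimpleGraph.Walk.map_isCycle_iff_of_injective hfinj).2 hc)
  have hKtree : KS.IsTree := ⟨hKconn, hKac⟩
  -- edge sets
  set SE1 : Set (Sym2 W) := Sym2.map φ₁ '' T₁.edgeSet with hSE1
  set SE2 : Set (Sym2 W) := Sym2.map φ₂ '' T₂.edgeSet with hSE2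
  have hunion : U.edgeSet = SE1 ∪ SE2 := by
    ext e
    induction e using Sym2.ind with
    | _ x y =>
      simp only [SimpleGraph.mem_edgeSet, Set.mem_union]
      constructor
      · intro h
        rcases hedge x y h with ⟨a, b, hab, rfl, rfl⟩ | ⟨a, b, hab, rfl, rfl⟩
        · exact Or.inl ⟨s(a, b), hab, Sym2.map_pair_eq _ _ _⟩
        · exact Or.inr ⟨s(a, b), hab, Sym2.map_pair_eq _ _ _⟩
      · rintro (⟨e', he', hmap⟩ | ⟨e', he', hmap⟩)
        · revert he' hmap
          induction e' using Sym2.ind with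
          | _ a b =>
            intro he' hmap
            rw [Sym2.map_pair_eq, Sym2.eq_iff] at hmap
            have hab : U.Adj (φ₁ a) (φ₁ b) := hφ₁a a b he'
            rcases hmap with ⟨rfl, rfl⟩ | ⟨rfl, rfl⟩
            · exact hab
            · exact hab.symm
        · revert he' hmap
          induction e' using Sym2.ind with
          | _ a b =>
            intro he' hmap
            rw [Sym2.map_pair_eq, Sym2.eq_iff] at hmap
            have hab : U.Adj (φ₂ a) (φ₂ b) := hφ₂a a b he'
            rcases hmap with ⟨rfl, rfl⟩ | ⟨rfl, rfl⟩
            · exact hab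
            · exact hab.symm
  haveI : Fintype T₁.edgeSet := (Set.toFinite _).fintype
  haveI : Fintype T₂.edgeSet := (Set.toFinite _).fintype
  have hcard1 : SE1.ncard + 1 = Fintype.card V₁ := by
    have h1 : SE1.ncard = T₁.edgeSet.ncard :=
      Set.ncard_image_of_injective _ (Sym2.map.injective hinj₁)
    have ht := hT₁.card_edgeFinset
    have hconv : T₁.edgeFinset.card = T₁.edgeSet.ncard := by
      rw [Set.ncard_eq_toFinset_card']; rfl
    omega
  have hcard2 : SE2.ncard + 1 = Fintype.card V₂ := by
    have h1 : SE2.ncard = T₂.edgeSet.ncard :=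
      Set.ncard_image_of_injective _ (Sym2.map.injective hinj₂)
    have ht := hT₂.card_edgeFinset
    have hconv : T₂.edgeFinset.card = T₂.edgeSet.ncard := by
      rw [Set.ncard_eq_toFinset_card']; rfl
    omega
  have hinter : SE1 ∩ SE2 = Sym2.map (Subtype.val : ↥Kv → W) '' KS.edgeSet := by
    ext e
    constructor
    · rintro ⟨he1, he2⟩
      obtain ⟨e₁, he₁, hm₁⟩ := he1
      obtain ⟨e₂, he₂, hm₂⟩ := he2
      revert he₁ hm₁
      induction e₁ using Sym2.ind with
      | _ a b =>
        intro he₁ hm₁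
        revert he₂ hm₂
        induction e₂ using Sym2.ind with
        | _ c d =>
          intro he₂ hm₂
          rw [Sym2.map_pair_eq] at hm₁ hm₂
          subst hm₁
          rw [Sym2.eq_iff] at hm₂
          have hxA : φ₁ a ∈ A := ⟨a, rfl⟩
          have hyA : φ₁ b ∈ A := ⟨b, rfl⟩
          have hxB : φ₁ a ∈ B := by
            rcases hm₂ with ⟨h1, h2⟩ | ⟨h1, h2⟩
            · exact ⟨c, h1⟩
            · exact ⟨d, h2⟩
          have hyB : φ₁ b ∈ B := by
            rcases hm₂ with ⟨h1, h2⟩ | ⟨h1, h2⟩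
            · exact ⟨d, h2⟩
            · exact ⟨c, h1⟩
          have hadj : U.Adj (φ₁ a) (φ₁ b) := hφ₁a a b he₁
          have hK := hadj_comm (φ₁ a) (φ₁ b) ⟨hxA, hxB⟩ ⟨hyA, hyB⟩ hadj
          refine ⟨s((⟨φ₁ a, ⟨hxA, hxB⟩⟩ : ↥Kv), (⟨φ₁ b, ⟨hyA, hyB⟩⟩ : ↥Kv)), ?_, ?_⟩
          · exact hK
          · rw [Sym2.map_pair_eq]
    · rintro ⟨e', he', hm⟩
      revert he' hm
      induction e' using Sym2.ind with
      | _ a b =>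
        intro he' hm
        rw [Sym2.map_pair_eq] at hm
        subst hm
        have hKab : KS.Adj a b := (SimpleGraph.mem_edgeSet (G := KS)).1 he'
        obtain ⟨h1, h2⟩ := hKab
        constructor
        · obtain ⟨a', b', hab, ha', hb'⟩ := h1
          exact ⟨s(a', b'), hab, by rw [Sym2.map_pair_eq, ha', hb']⟩
        · obtain ⟨a', b', hab, ha', hb'⟩ := h2
          exact ⟨s(a', b'), hab, by rw [Sym2.map_pair_eq, ha', hb']⟩
  haveI : Fintype ↥Kv := (Set.toFinite _).fintype
  haveI : Fintype KS.edgeSet := (Set.toFinite _).fintype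
  have hKcount := hKtree.card_edgeFinset
  have hKconv : KS.edgeFinset.card = KS.edgeSet.ncard := by
    rw [Set.ncard_eq_toFinset_card']; rfl
  have hKvcard : Fintype.card ↥Kv = Kv.ncard := by
    rw [← Nat.card_eq_fintype_card, Nat.card_coe_set_eq]
  have hintercard : (SE1 ∩ SE2).ncard = KS.edgeSet.ncard := by
    rw [hinter, Set.ncard_image_of_injective _ (Sym2.map.injective Subtype.val_injective)]
  have hEU : U.edgeSet.ncard + (SE1 ∩ SE2).ncard = SE1.ncard + SE2.ncard := by
    rw [hunion]
    exact Set.ncard_union_add_ncard_inter _ _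
  apply isTree_of_connected_of_card U hUconn
  omega

end MainProof
end

section
/- For any two finite trees T1 and T2 there exists a minimum isometric-universal graph for the family {T1, T2} that is itself a tree. -/
open SimpleGraph

lemma path_length_eq_dist {V : Type*} {G : SimpleGraph V} (hG : G.IsAcyclic)
    {u v : V} (p : G.Walk u v) (hp : p.IsPath) : p.length = G.dist u v := by
  classical
  obtain ⟨w, hw⟩ := p.reachable.exists_walk_length_eq_dist
  have h1 : G.dist u v ≤ p.length := SimpleGraph.dist_le p
  have h2 : (⟨p, hp⟩ : G.Path u v) = w.toPath := hG.path_unique _ _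
  have h3 : (w.toPath : G.Walk u v).length ≤ w.length := SimpleGraph.Walk.length_bypass_le w
  have h4 : p.length = (w.toPath : G.Walk u v).length := by rw [← h2]
  omega

lemma edist_eq_dist_of_reachable {V : Type*} {G : SimpleGraph V} {u v : V}
    (h : G.Reachable u v) : G.edist u v = (G.dist u v : ℕ∞) := by
  have := SimpleGraph.edist_ne_top_iff_reachable.2 h
  rw [SimpleGraph.dist, ENat.coe_toNat this]

lemma dist_map_of_acyclic {V W : Type*} {T : SimpleGraph V} {U : SimpleGraph W}
    (hT : T.IsTree) (hU : U.IsAcyclic) {f : V → W} (hinj : Function.Injective f)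
    (hf : ∀ a b : V, T.Adj a b → U.Adj (f a) (f b)) (u v : V) :
    U.dist (f u) (f v) = T.dist u v := by
  obtain ⟨p, hp, hl⟩ := hT.isConnected.exists_path_of_dist u v
  let φ : T →g U := ⟨f, fun h => hf _ _ h⟩
  have hp' : (p.map φ).IsPath := SimpleGraph.Walk.map_isPath_of_injective hinj hp
  have := path_length_eq_dist hU (p.map φ) hp'
  rw [SimpleGraph.Walk.length_map, hl] at this
  exact this.symm

lemma exists_step {V : Type*} {G : SimpleGraph V} (hc : G.Connected) {a b : V}
    (h : G.dist a b ≠ 0) : ∃ c, G.Adj a c ∧ G.dist c b + 1 = G.dist a b := by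
  obtain ⟨w, hw⟩ := (hc a b).exists_walk_length_eq_dist
  cases w with
  | nil => simp at h
  | @cons _ c _ hadj q =>
    refine ⟨c, hadj, ?_⟩
    have h1 : G.dist c b ≤ q.length := SimpleGraph.dist_le q
    have h2 : G.dist a b ≤ G.dist a c + G.dist c b := hc.dist_triangle
    have h3 : G.dist a c ≤ 1 := by
      simpa using SimpleGraph.dist_le (SimpleGraph.Walk.cons hadj SimpleGraph.Walk.nil)
    simp only [SimpleGraph.Walk.length_cons] at hw
    omega

lemma card_le_of_connected {V : Type*} [Fintype V] {G : SimpleGraph V} [Fintype G.edgeSet]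
    (hc : G.Connected) : Fintype.card V ≤ G.edgeFinset.card + 1 := by
  classical
  obtain ⟨r⟩ := hc.nonempty
  have hp : ∀ v : V, v ≠ r → ∃ w, G.Adj v w ∧ G.dist w r + 1 = G.dist v r := by
    intro v hv
    apply exists_step hc
    simp [SimpleGraph.dist_ne_zero_iff_ne_and_reachable, hv, hc v r]
  choose! p hp1 hp2 using hp
  have hinj : Set.InjOn (fun v => s(v, p v)) ↑(Finset.univ.erase r) := by
    intro v hv w hw hvw
    simp only [Finset.coe_erase, Set.mem_diff, Set.mem_singleton_iff] at hv hw
    simp only [Sym2.eq_iff] at hvw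
    rcases hvw with ⟨h1, _⟩ | ⟨h1, h2⟩
    · exact h1
    · exfalso
      have e1 := hp2 v hv.2
      have e2 := hp2 w hw.2
      rw [h2] at e1; rw [← h1] at e2
      omega
  have hmaps : ∀ v ∈ Finset.univ.erase r, s(v, p v) ∈ G.edgeFinset := by
    intro v hv
    rw [SimpleGraph.mem_edgeFinset]
    exact (hp1 v (Finset.mem_erase.1 hv).1)
  have := Finset.card_le_card_of_injOn _ hmaps hinj
  rw [Finset.card_erase_of_mem (Finset.mem_univ r), Finset.card_univ] at this
  omega

lemma isTree_of_connected_of_card_le {V : Type*} [Fintype V] {G : SimpleGraph V}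
    [Fintype G.edgeSet] (hc : G.Connected)
    (hcard : G.edgeFinset.card + 1 ≤ Fintype.card V) : G.IsTree := by
  classical
  refine ⟨hc, ?_⟩
  obtain ⟨r⟩ := hc.nonempty
  have hp : ∀ v : V, v ≠ r → ∃ w, G.Adj v w ∧ G.dist w r + 1 = G.dist v r := by
    intro v hv
    apply exists_step hc
    simp [SimpleGraph.dist_ne_zero_iff_ne_and_reachable, hv, hc v r]
  choose! p hp1 hp2 using hp
  set F : V → Sym2 V := fun v => s(v, p v) with hF
  have hinj : Set.InjOn F ↑(Finset.univ.erase r) := by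
    intro v hv w hw hvw
    simp only [Finset.coe_erase, Set.mem_diff, Set.mem_singleton_iff] at hv hw
    simp only [hF, Sym2.eq_iff] at hvw
    rcases hvw with ⟨h1, _⟩ | ⟨h1, h2⟩
    · exact h1
    · exfalso
      have e1 := hp2 v hv.2
      have e2 := hp2 w hw.2
      rw [h2] at e1; rw [← h1] at e2
      omega
  have hmaps : (Finset.univ.erase r).image F ⊆ G.edgeFinset := by
    intro e he
    obtain ⟨v, hv, rfl⟩ := Finset.mem_image.1 he
    rw [SimpleGraph.mem_edgeFinset]
    exact hp1 v (Finset.mem_erase.1 hv).1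
  have hcardim : ((Finset.univ.erase r).image F).card = Fintype.card V - 1 := by
    rw [Finset.card_image_of_injOn hinj,
      Finset.card_erase_of_mem (Finset.mem_univ r), Finset.card_univ]
  have himeq : (Finset.univ.erase r).image F = G.edgeFinset := by
    apply Finset.eq_of_subset_of_card_le hmaps
    have hpos : 1 ≤ Fintype.card V := @Fintype.card_pos _ _ ⟨r⟩
    omega
  -- every edge is a parent edge
  have hP : ∀ u w : V, G.Adj u w → (u ≠ r ∧ w = p u) ∨ (w ≠ r ∧ u = p w) := by
    intro u w huw
    have : s(u, w) ∈ G.edgeFinset := SimpleGraph.mem_edgeFinset.2 huw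
    rw [← himeq] at this
    obtain ⟨v, hv, hve⟩ := Finset.mem_image.1 this
    have hvr := (Finset.mem_erase.1 hv).1
    simp only [hF, Sym2.eq_iff] at hve
    rcases hve with ⟨rfl, rfl⟩ | ⟨rfl, rfl⟩
    · exact Or.inl ⟨hvr, rfl⟩
    · exact Or.inr ⟨hvr, rfl⟩
  have hdown : ∀ u w : V, G.Adj u w → G.dist w r ≤ G.dist u r → u ≠ r ∧ w = p u := by
    intro u w huw hle
    rcases hP u w huw with h | ⟨hwr, rfl⟩
    · exact h
    · exfalso; have := hp2 w hwr; omega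
  -- no cycles
  intro v c hcyc
  obtain ⟨m, hm, hmax⟩ := Finset.exists_max_image c.support.toFinset (fun x => G.dist x r)
    ⟨v, List.mem_toFinset.2 c.start_mem_support⟩
  rw [List.mem_toFinset] at hm
  have hmax' : ∀ x ∈ c.support, G.dist x r ≤ G.dist m r := by
    intro x hx; exact hmax x (List.mem_toFinset.2 hx)
  set c' := c.rotate m hm with hc'
  have hcyc' : c'.IsCycle := hcyc.rotate hm
  have hsup' : ∀ x ∈ c'.support, G.dist x r ≤ G.dist m r := by
    intro x hx
    rcases (SimpleGraph.Walk.mem_support_iff c').1 hx with rfl | hx'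
    · exact le_refl _
    · have : x ∈ c.support.tail := (SimpleGraph.Walk.support_rotate c m hm).mem_iff.1 hx'
      exact hmax' x (List.mem_of_mem_tail this)
  clear_value c'
  cases c' with
  | nil => exact hcyc'.ne_nil rfl
  | @cons _ b _ hadj q =>
    have hb : b ∈ (SimpleGraph.Walk.cons hadj q).support := by
      rw [SimpleGraph.Walk.support_cons]
      exact List.mem_cons_of_mem _ q.start_mem_support
    have hbm : b = p m := (hdown m b hadj (hsup' b hb)).2
    -- last edge
    have hqrev : (q.reverse : G.Walk m b) = q.reverse := rfl
    obtain ⟨x, h₂, q₂, hq₂⟩ := SimpleGraph.Walk.exists_eq_cons_of_ne (hadj.ne) q.reverse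
    have hxsup : x ∈ q.support := by
      have : x ∈ q.reverse.support := by
        rw [hq₂, SimpleGraph.Walk.support_cons]
        exact List.mem_cons_of_mem _ q₂.start_mem_support
      rwa [SimpleGraph.Walk.support_reverse, List.mem_reverse] at this
    have hxsup' : x ∈ (SimpleGraph.Walk.cons hadj q).support := by
      rw [SimpleGraph.Walk.support_cons]
      exact List.mem_cons_of_mem _ hxsup
    have hxm : x = p m := (hdown m x h₂ (hsup' x hxsup')).2
    have hedge : s(m, x) ∈ q.edges := by
      have : s(m, x) ∈ q.reverse.edges := by
        rw [hq₂, SimpleGraph.Walk.edges_cons]; exact List.mem_cons_self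
      rwa [SimpleGraph.Walk.edges_reverse, List.mem_reverse] at this
    have hnodup := hcyc'.isCircuit.isTrail.edges_nodup
    rw [SimpleGraph.Walk.edges_cons] at hnodup
    have : s(m, b) ∉ q.edges := (List.nodup_cons.1 hnodup).1
    have hxb : x = b := hxm.trans hbm.symm
    rw [hxb] at hedge
    exact this hedge

lemma tree_dist_formula {V : Type*} {G : SimpleGraph V} (hG : G.IsTree) {a b c : V}
    (hac : G.Adj a c) (hcb : G.dist c b + 1 = G.dist a b) (x : V) :
    G.dist c x = max (G.dist a x - 1) (G.dist b x + 1 - G.dist a b) := by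
  classical
  have hconn := hG.isConnected
  have hacy : G.IsAcyclic := hG.2
  have cax : G.dist a x = G.dist x a := SimpleGraph.dist_comm
  have ccx : G.dist c x = G.dist x c := SimpleGraph.dist_comm
  have cbx : G.dist b x = G.dist x b := SimpleGraph.dist_comm
  obtain ⟨P, hP, hPl⟩ := hconn.exists_path_of_dist x a
  by_cases hcP : c ∈ P.support
  · have h1 : (P.takeUntil c hcP).length = G.dist x c :=
      path_length_eq_dist hacy _ (hP.takeUntil hcP)
    have h2 : (P.dropUntil c hcP).length = G.dist c a :=
      path_length_eq_dist hacy _ (hP.dropUntil hcP)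
    have h3 : (P.takeUntil c hcP).length + (P.dropUntil c hcP).length = P.length := by
      rw [← SimpleGraph.Walk.length_append, SimpleGraph.Walk.take_spec]
    have hca : G.dist c a = 1 := by
      rw [SimpleGraph.dist_eq_one_iff_adj]; exact hac.symm
    have htri : G.dist x b ≤ G.dist x c + G.dist c b := hconn.dist_triangle
    rw [Nat.max_eq_left (by omega)]
    omega
  · -- c is not on the geodesic from x to a
    have hxc : G.dist x c = G.dist x a + 1 := by
      have hrev : (SimpleGraph.Walk.cons hac.symm P.reverse).IsPath := by
        rw [SimpleGraph.Walk.cons_isPath_iff]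
        refine ⟨hP.reverse, ?_⟩
        rwa [SimpleGraph.Walk.support_reverse, List.mem_reverse]
      have hlen := path_length_eq_dist hacy _ hrev
      simp only [SimpleGraph.Walk.length_cons, SimpleGraph.Walk.length_reverse, hPl] at hlen
      rw [SimpleGraph.dist_comm (u := c)] at hlen
      omega
    obtain ⟨Q₀, hQ₀, hQ₀l⟩ := hconn.exists_path_of_dist c b
    have haQ : a ∉ Q₀.support := by
      intro haQ
      have l1 : (Q₀.takeUntil a haQ).length = G.dist c a :=
        path_length_eq_dist hacy _ (hQ₀.takeUntil haQ)
      have l2 : (Q₀.dropUntil a haQ).length = G.dist a b :=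
        path_length_eq_dist hacy _ (hQ₀.dropUntil haQ)
      have l3 : (Q₀.takeUntil a haQ).length + (Q₀.dropUntil a haQ).length = Q₀.length := by
        rw [← SimpleGraph.Walk.length_append, SimpleGraph.Walk.take_spec]
      have hca : G.dist c a = 1 := by
        rw [SimpleGraph.dist_eq_one_iff_adj]; exact hac.symm
      omega
    have hdisj : ∀ w, w ∈ P.support → w ∈ Q₀.support → False := by
      intro w hwP hwQ
      have hR₁ : (P.dropUntil w hwP).IsPath := hP.dropUntil hwP
      have hQt : (Q₀.takeUntil w hwQ).IsPath := hQ₀.takeUntil hwQ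
      have haQt : a ∉ (Q₀.takeUntil w hwQ).support :=
        fun h => haQ (SimpleGraph.Walk.support_takeUntil_subset _ hwQ h)
      have hR₂ : (SimpleGraph.Walk.cons hac (Q₀.takeUntil w hwQ)).IsPath := by
        rw [SimpleGraph.Walk.cons_isPath_iff]; exact ⟨hQt, haQt⟩
      have hEq := hacy.path_unique ⟨P.dropUntil w hwP, hR₁⟩
        ⟨(SimpleGraph.Walk.cons hac (Q₀.takeUntil w hwQ)).reverse, hR₂.reverse⟩
      have hEq' : P.dropUntil w hwP =
          (SimpleGraph.Walk.cons hac (Q₀.takeUntil w hwQ)).reverse :=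
        congrArg Subtype.val hEq
      have hcmem : c ∈ ((SimpleGraph.Walk.cons hac (Q₀.takeUntil w hwQ)).reverse).support := by
        rw [SimpleGraph.Walk.support_reverse, List.mem_reverse,
          SimpleGraph.Walk.support_cons]
        exact List.mem_cons_of_mem _ (Q₀.takeUntil w hwQ).start_mem_support
      rw [← hEq'] at hcmem
      exact hcP (SimpleGraph.Walk.support_dropUntil_subset _ hwP hcmem)
    have hQ : (SimpleGraph.Walk.cons hac Q₀).IsPath := by
      rw [SimpleGraph.Walk.cons_isPath_iff]; exact ⟨hQ₀, haQ⟩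
    have hPQ : (P.append (SimpleGraph.Walk.cons hac Q₀)).IsPath := by
      rw [SimpleGraph.Walk.isPath_def, SimpleGraph.Walk.support_append,
        SimpleGraph.Walk.support_cons, List.tail_cons, List.nodup_append]
      exact ⟨hP.support_nodup, hQ₀.support_nodup, fun w hw w' hw' hww' => hdisj w hw (by rw [hww']; exact hw')⟩
    have hxb : G.dist x b = G.dist x a + 1 + G.dist c b := by
      have := path_length_eq_dist hacy _ hPQ
      rw [SimpleGraph.Walk.length_append, SimpleGraph.Walk.length_cons, hPl, hQ₀l] at this
      omega
    rw [Nat.max_eq_right (by omega)]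
    omega

def GoodR {V₁ V₂ : Type*} (T₁ : SimpleGraph V₁) (T₂ : SimpleGraph V₂)
    (R : Finset (V₁ × V₂)) : Prop :=
  ∀ p ∈ R, ∀ q ∈ R, T₁.dist p.1 q.1 = T₂.dist p.2 q.2

lemma good_insert {V₁ V₂ : Type*} [DecidableEq V₁] [DecidableEq V₂]
    {T₁ : SimpleGraph V₁} {T₂ : SimpleGraph V₂}
    (hT₁ : T₁.IsTree) (hT₂ : T₂.IsTree) {R : Finset (V₁ × V₂)} (hR : GoodR T₁ T₂ R)
    {a b : V₁} {y y' : V₂} (ha : (a, y) ∈ R) (hb : (b, y') ∈ R)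
    {c : V₁} {c' : V₂} (hac : T₁.Adj a c) (hcb : T₁.dist c b + 1 = T₁.dist a b)
    (hyc : T₂.Adj y c') (hcy : T₂.dist c' y' + 1 = T₂.dist y y') :
    GoodR T₁ T₂ (insert (c, c') R) := by
  classical
  have key : ∀ p ∈ R, T₁.dist c p.1 = T₂.dist c' p.2 := by
    intro p hp
    have e1 := tree_dist_formula hT₁ hac hcb p.1
    have e2 := tree_dist_formula hT₂ hyc hcy p.2
    have h1 : T₁.dist a p.1 = T₂.dist y p.2 := hR _ ha _ hp
    have h2 : T₁.dist b p.1 = T₂.dist y' p.2 := hR _ hb _ hp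
    have h3 : T₁.dist a b = T₂.dist y y' := hR _ ha _ hb
    rw [e1, e2, h1, h2, h3]
  intro p hp q hq
  rcases Finset.mem_insert.1 hp with rfl | hp <;> rcases Finset.mem_insert.1 hq with rfl | hq
  · simp [SimpleGraph.dist_self]
  · exact key q hq
  · have hk := key p hp
    rw [SimpleGraph.dist_comm (u := c) (v := p.1),
      SimpleGraph.dist_comm (u := c') (v := p.2)] at hk
    exact hk
  · exact hR _ hp _ hq

lemma induced_connected {V₁ V₂ : Type*} [DecidableEq V₁] [DecidableEq V₂]
    {T₁ : SimpleGraph V₁} {T₂ : SimpleGraph V₂}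
    (hT₁ : T₁.IsTree) (hT₂ : T₂.IsTree)
    {R : Finset (V₁ × V₂)} (hR : GoodR T₁ T₂ R)
    (hmax : ∀ R' : Finset (V₁ × V₂), GoodR T₁ T₂ R' → R'.card ≤ R.card)
    (hne : R.Nonempty) :
    (T₂.induce ↑(R.image Prod.snd)).Connected := by
  classical
  have hreach : ∀ (n : ℕ) (a b : V₁) (u v : ↥(↑(R.image Prod.snd) : Set V₂)),
      (a, u.val) ∈ R → (b, v.val) ∈ R → T₁.dist a b ≤ n →
      (T₂.induce ↑(R.image Prod.snd)).Reachable u v := by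
    intro n
    induction n with
    | zero =>
      intro a b u v ha hb hd
      have hab : a = b := (hT₁.isConnected.dist_eq_zero_iff).1 (Nat.le_zero.1 hd)
      subst hab
      have : T₂.dist u.val v.val = 0 := by
        have := hR _ ha _ hb
        simp only [SimpleGraph.dist_self] at this
        omega
      have : u.val = v.val := (hT₂.isConnected.dist_eq_zero_iff).1 this
      rw [Subtype.ext this]
    | succ n ih =>
      intro a b u v ha hb hd
      by_cases h0 : T₁.dist a b = 0
      · have hab : a = b := (hT₁.isConnected.dist_eq_zero_iff).1 h0
        subst hab
        have : T₂.dist u.val v.val = 0 := by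
          have := hR _ ha _ hb
          simp only [SimpleGraph.dist_self] at this
          omega
        have : u.val = v.val := (hT₂.isConnected.dist_eq_zero_iff).1 this
        rw [Subtype.ext this]
      · obtain ⟨c, hac, hcb⟩ := exists_step hT₁.isConnected h0
        have hd2 : T₂.dist u.val v.val = T₁.dist a b := (hR _ ha _ hb).symm
        have h0' : T₂.dist u.val v.val ≠ 0 := by omega
        obtain ⟨c', hyc, hcy⟩ := exists_step hT₂.isConnected h0'
        have hgood : GoodR T₁ T₂ (insert (c, c') R) :=
          good_insert hT₁ hT₂ hR ha hb hac hcb hyc hcy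
        have hcc : (c, c') ∈ R := by
          by_contra hcc
          have := hmax _ hgood
          rw [Finset.card_insert_of_notMem hcc] at this
          omega
        have hcmem : c' ∈ ↑(R.image Prod.snd) :=
          Finset.mem_coe.2 (Finset.mem_image.2 ⟨(c, c'), hcc, rfl⟩)
        have hadj : (T₂.induce ↑(R.image Prod.snd)).Adj u ⟨c', hcmem⟩ := hyc
        exact hadj.reachable.trans (ih c b ⟨c', hcmem⟩ v hcc hb (by omega))
  rw [SimpleGraph.connected_iff]
  constructor
  · intro u v
    obtain ⟨⟨a, y⟩, ha, hy⟩ := Finset.mem_image.1 (Finset.mem_coe.1 u.prop)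
    obtain ⟨⟨b, y'⟩, hb, hy'⟩ := Finset.mem_image.1 (Finset.mem_coe.1 v.prop)
    simp only at hy hy'
    exact hreach (T₁.dist a b) a b u v (by rw [hy] at ha; exact ha)
      (by rw [hy'] at hb; exact hb) le_rfl
  · obtain ⟨p, hp⟩ := hne
    exact ⟨⟨p.2, Finset.mem_coe.2 (Finset.mem_image.2 ⟨p, hp, rfl⟩)⟩⟩
lemma isometric_embedding_of_tree {V W : Type} {T : SimpleGraph V} {U : SimpleGraph W}
    (hT : T.IsTree) (hU : U.IsAcyclic) {f : V → W} (hinj : Function.Injective f)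
    (hf : ∀ a b : V, T.Adj a b → U.Adj (f a) (f b)) : IsIsometricEmbedding T U f := by
  refine ⟨hf, fun u v => ?_⟩
  have hr : T.Reachable u v := hT.isConnected.preconnected u v
  let φ : T →g U := ⟨f, fun h => hf _ _ h⟩
  have hr' : U.Reachable (f u) (f v) := hr.map φ
  rw [edist_eq_dist_of_reachable hr, edist_eq_dist_of_reachable hr',
    dist_map_of_acyclic hT hU hinj hf u v]

/-- For any two finite trees `T₁, T₂` there is a minimum
isometric-universal graph for `{T₁, T₂}` that is itself a tree. -/
theorem stmt_1 {V₁ V₂ : Type} [Fintype V₁] [Fintype V₂]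
    (T₁ : SimpleGraph V₁) (T₂ : SimpleGraph V₂)
    (hT₁ : T₁.IsTree) (hT₂ : T₂.IsTree) :
    ∃ (W : Type) (_ : Fintype W) (U : SimpleGraph W),
      U.IsTree ∧ IsIsoUniversalPair T₁ T₂ U ∧
      ∀ (W' : Type) (_ : Finite W') (U' : SimpleGraph W'),
        IsIsoUniversalPair T₁ T₂ U' → Nat.card W ≤ Nat.card W' := by
  classical
  obtain ⟨a₀⟩ := hT₁.isConnected.nonempty
  obtain ⟨b₀⟩ := hT₂.isConnected.nonempty
  have hsing : GoodR T₁ T₂ {(a₀, b₀)} := by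
    intro p hp q hq
    simp only [Finset.mem_singleton] at hp hq
    subst hp; subst hq
    simp [SimpleGraph.dist_self]
  obtain ⟨R, hRmem, hRmax'⟩ := Finset.exists_max_image
    ((Finset.univ : Finset (V₁ × V₂)).powerset.filter (fun R => GoodR T₁ T₂ R)) Finset.card
    ⟨{(a₀, b₀)}, Finset.mem_filter.2 ⟨Finset.mem_powerset.2 (Finset.subset_univ _), hsing⟩⟩
  have hR : GoodR T₁ T₂ R := (Finset.mem_filter.1 hRmem).2
  have hRmax : ∀ R' : Finset (V₁ × V₂), GoodR T₁ T₂ R' → R'.card ≤ R.card := fun R' h =>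
    hRmax' R' (Finset.mem_filter.2 ⟨Finset.mem_powerset.2 (Finset.subset_univ _), h⟩)
  have hRne : R.Nonempty := by
    rw [← Finset.card_pos]
    have := hRmax {(a₀, b₀)} hsing
    simp only [Finset.card_singleton] at this
    omega
  have hfun₁ : ∀ a y y', (a, y) ∈ R → (a, y') ∈ R → y = y' := by
    intro a y y' h1 h2
    have h : T₁.dist a a = T₂.dist y y' := hR _ h1 _ h2
    simp only [SimpleGraph.dist_self] at h
    exact (hT₂.isConnected.dist_eq_zero_iff).1 h.symm
  have hfun₂ : ∀ a a' y, (a, y) ∈ R → (a', y) ∈ R → a = a' := by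
    intro a a' y h1 h2
    have h : T₁.dist a a' = T₂.dist y y := hR _ h1 _ h2
    simp only [SimpleGraph.dist_self] at h
    exact (hT₁.isConnected.dist_eq_zero_iff).1 h
  set E : Finset V₂ := R.image Prod.snd with hE
  have hρex : ∀ y : V₂, ∃ a, y ∈ E → (a, y) ∈ R := by
    intro y
    by_cases hy : y ∈ E
    · obtain ⟨⟨a, y'⟩, hp, he⟩ := Finset.mem_image.1 hy
      dsimp only at he
      subst he
      exact ⟨a, fun _ => hp⟩
    · exact ⟨a₀, fun h => absurd h hy⟩
  choose ρ hρspec using hρex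
  have hσex : ∀ a : V₁, ∃ z, (∃ z', (a, z') ∈ R) → (a, z) ∈ R := by
    intro a
    by_cases ha : ∃ z', (a, z') ∈ R
    · obtain ⟨z, hz⟩ := ha
      exact ⟨z, fun _ => hz⟩
    · exact ⟨b₀, fun h => absurd h ha⟩
  choose σ hσspec using hσex
  have hρ' : ∀ a z, (a, z) ∈ R → ρ z = a := by
    intro a z h
    have hz : z ∈ E := Finset.mem_image.2 ⟨(a, z), h, rfl⟩
    exact hfun₂ _ _ _ (hρspec z hz) h
  have hσ' : ∀ a z, (a, z) ∈ R → σ a = z := by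
    intro a z h
    exact hfun₁ _ _ _ (hσspec a ⟨z, h⟩) h
  have hσE : ∀ a z, (a, z) ∈ R → σ a ∈ E := by
    intro a z h
    exact Finset.mem_image.2 ⟨(a, z), h, (hσ' a z h).symm⟩
  -- the glued graph
  let W : Type := V₁ ⊕ {v : V₂ // v ∉ E}
  let g : V₂ → W := fun v => if h : v ∈ E then Sum.inl (ρ v) else Sum.inr ⟨v, h⟩
  let A : W → W → Prop := fun x y =>
    match x, y with
    | Sum.inl a, Sum.inl a' => T₁.Adj a a'
    | Sum.inl a, Sum.inr v => ∃ z, (a, z) ∈ R ∧ T₂.Adj z v.val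
    | Sum.inr v, Sum.inl a => ∃ z, (a, z) ∈ R ∧ T₂.Adj z v.val
    | Sum.inr v, Sum.inr v' => T₂.Adj v.val v'.val
  let U : SimpleGraph W :=
    { Adj := A
      symm := by
        constructor
        intro x y h
        match x, y with
        | Sum.inl a, Sum.inl a' => exact h.symm
        | Sum.inl a, Sum.inr v => exact h
        | Sum.inr v, Sum.inl a => exact h
        | Sum.inr v, Sum.inr v' => exact h.symm
      loopless := by
        constructor
        intro x h
        match x with
        | Sum.inl a => exact T₁.loopless.irrefl a h
        | Sum.inr v => exact T₂.loopless.irrefl v.val h }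
  have hgE : ∀ v (h : v ∈ E), g v = Sum.inl (ρ v) := fun v h => dif_pos h
  have hgnE : ∀ v (h : v ∉ E), g v = Sum.inr ⟨v, h⟩ := fun v h => dif_neg h
  have h₁adj : ∀ a a', T₁.Adj a a' → U.Adj (Sum.inl a) (Sum.inl a') := fun _ _ h => h
  have hgadj : ∀ v v', T₂.Adj v v' → U.Adj (g v) (g v') := by
    intro v v' h
    by_cases hv : v ∈ E <;> by_cases hv' : v' ∈ E
    · rw [hgE v hv, hgE v' hv']
      have h1 : T₁.dist (ρ v) (ρ v') = T₂.dist v v' := hR _ (hρspec v hv) _ (hρspec v' hv')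
      have h2 : T₂.dist v v' = 1 := SimpleGraph.dist_eq_one_iff_adj.2 h
      have h3 : T₁.Adj (ρ v) (ρ v') := SimpleGraph.dist_eq_one_iff_adj.1 (by rw [h1, h2])
      exact h₁adj _ _ h3
    · rw [hgE v hv, hgnE v' hv']
      exact ⟨v, hρspec v hv, h⟩
    · rw [hgnE v hv, hgE v' hv']
      exact ⟨v', hρspec v' hv', h.symm⟩
    · rw [hgnE v hv, hgnE v' hv']
      exact h
  have hginj : Function.Injective g := by
    intro v v' h
    by_cases hv : v ∈ E <;> by_cases hv' : v' ∈ E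
    · rw [hgE v hv, hgE v' hv'] at h
      have := Sum.inl_injective h
      exact hfun₁ (ρ v) v v' (hρspec v hv) (this ▸ hρspec v' hv')
    · rw [hgE v hv, hgnE v' hv'] at h; exact absurd h (by simp)
    · rw [hgnE v hv, hgE v' hv'] at h; exact absurd h (by simp)
    · rw [hgnE v hv, hgnE v' hv'] at h
      exact congrArg Subtype.val (Sum.inr_injective h)
  -- connected
  obtain ⟨⟨a₁, y₁⟩, hp₁⟩ := hRne
  have hy₁E : y₁ ∈ E := Finset.mem_image.2 ⟨(a₁, y₁), hp₁, rfl⟩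
  let φ₁ : T₁ →g U := ⟨Sum.inl, fun h => h₁adj _ _ h⟩
  let φ₂ : T₂ →g U := ⟨g, fun h => hgadj _ _ h⟩
  have hreachU : ∀ w : W, U.Reachable w (Sum.inl a₁) := by
    intro w
    match w with
    | Sum.inl a => exact (hT₁.isConnected.preconnected a a₁).map φ₁
    | Sum.inr v =>
      have h1 : U.Reachable (g v.val) (g y₁) := (hT₂.isConnected.preconnected v.val y₁).map φ₂
      rw [hgnE v.val v.prop, hgE y₁ hy₁E] at h1
      have h2 : U.Reachable (Sum.inl (ρ y₁)) (Sum.inl a₁) :=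
        (hT₁.isConnected.preconnected (ρ y₁) a₁).map φ₁
      exact (Subtype.eta v v.prop ▸ h1).trans h2
  have hUconn : U.Connected := by
    rw [SimpleGraph.connected_iff]
    exact ⟨fun u v => (hreachU u).trans (hreachU v).symm, ⟨Sum.inl a₁⟩⟩
  -- edge counting
  haveI : Fintype ↑U.edgeSet := Fintype.ofFinite _
  haveI : Fintype ↑T₁.edgeSet := Fintype.ofFinite _
  haveI : Fintype ↑T₂.edgeSet := Fintype.ofFinite _
  let Touch : Sym2 V₂ → Prop := fun e => ¬ ∀ v ∈ e, v ∈ E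
  let Φ : Sym2 W → Sym2 V₁ ⊕ Sym2 V₂ := Sym2.lift ⟨fun x y =>
    match x, y with
    | Sum.inl a, Sum.inl a' => Sum.inl s(a, a')
    | Sum.inl a, Sum.inr v => Sum.inr s(σ a, v.val)
    | Sum.inr v, Sum.inl a => Sum.inr s(σ a, v.val)
    | Sum.inr v, Sum.inr v' => Sum.inr s(v.val, v'.val),
    by
      intro x y
      match x, y with
      | Sum.inl a, Sum.inl a' => simp [Sym2.eq_swap]
      | Sum.inl a, Sum.inr v => rfl
      | Sum.inr v, Sum.inl a => rfl
      | Sum.inr v, Sum.inr v' => simp [Sym2.eq_swap]⟩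
  have hΦ : ∀ x y : W, U.Adj x y →
      (∃ p : Sym2 V₁, p ∈ T₁.edgeFinset ∧ Φ s(x, y) = Sum.inl p ∧ s(x, y) = Sym2.map Sum.inl p) ∨
      (∃ p : Sym2 V₂, p ∈ T₂.edgeFinset.filter Touch ∧ Φ s(x, y) = Sum.inr p ∧
        s(x, y) = Sym2.map g p) := by
    intro x y h
    match x, y with
    | Sum.inl a, Sum.inl a' =>
      exact Or.inl ⟨s(a, a'), SimpleGraph.mem_edgeFinset.2 h, rfl, rfl⟩
    | Sum.inl a, Sum.inr v =>
      obtain ⟨z, hz, hzadj⟩ := h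
      have hσa : σ a = z := hσ' a z hz
      refine Or.inr ⟨s(σ a, v.val), ?_, rfl, ?_⟩
      · rw [Finset.mem_filter]
        refine ⟨SimpleGraph.mem_edgeFinset.2 (by rw [hσa]; exact hzadj), ?_⟩
        intro hall
        exact v.prop (hall v.val (Sym2.mem_mk_right _ _))
      · rw [Sym2.map_pair_eq, hgE (σ a) (hσa ▸ Finset.mem_image.2 ⟨(a, z), hz, rfl⟩),
          hρ' a (σ a) (hσa ▸ hz), hgnE v.val v.prop, Subtype.eta]
    | Sum.inr v, Sum.inl a =>
      obtain ⟨z, hz, hzadj⟩ := h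
      have hσa : σ a = z := hσ' a z hz
      refine Or.inr ⟨s(σ a, v.val), ?_, rfl, ?_⟩
      · rw [Finset.mem_filter]
        refine ⟨SimpleGraph.mem_edgeFinset.2 (by rw [hσa]; exact hzadj), ?_⟩
        intro hall
        exact v.prop (hall v.val (Sym2.mem_mk_right _ _))
      · rw [Sym2.map_pair_eq, hgE (σ a) (hσa ▸ Finset.mem_image.2 ⟨(a, z), hz, rfl⟩),
          hρ' a (σ a) (hσa ▸ hz), hgnE v.val v.prop, Subtype.eta, Sym2.eq_swap]
    | Sum.inr v, Sum.inr v' =>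
      refine Or.inr ⟨s(v.val, v'.val), ?_, rfl, ?_⟩
      · rw [Finset.mem_filter]
        refine ⟨SimpleGraph.mem_edgeFinset.2 h, ?_⟩
        intro hall
        exact v.prop (hall v.val (Sym2.mem_mk_left _ _))
      · rw [Sym2.map_pair_eq, hgnE v.val v.prop, hgnE v'.val v'.prop, Subtype.eta, Subtype.eta]
  have hcard1 : U.edgeFinset.card ≤
      T₁.edgeFinset.card + (T₂.edgeFinset.filter Touch).card := by
    have hsub : ∀ e ∈ U.edgeFinset,
        Φ e ∈ T₁.edgeFinset.map ⟨Sum.inl, Sum.inl_injective⟩ ∪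
          (T₂.edgeFinset.filter Touch).map ⟨Sum.inr, Sum.inr_injective⟩ := by
      intro e he
      revert he
      induction e using Sym2.ind with
      | _ x y =>
        intro he
        rw [SimpleGraph.mem_edgeFinset, SimpleGraph.mem_edgeSet] at he
        rcases hΦ x y he with ⟨p, hp, h1, _⟩ | ⟨p, hp, h1, _⟩
        · exact Finset.mem_union_left _ (Finset.mem_map.2 ⟨p, hp, h1.symm⟩)
        · exact Finset.mem_union_right _ (Finset.mem_map.2 ⟨p, hp, h1.symm⟩)
    have hinjΦ : Set.InjOn Φ ↑U.edgeFinset := by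
      intro e he e' he' heq
      revert he he' heq
      induction e using Sym2.ind with
      | _ x y =>
        induction e' using Sym2.ind with
        | _ x' y' =>
          intro he he' heq
          rw [Finset.mem_coe, SimpleGraph.mem_edgeFinset, SimpleGraph.mem_edgeSet] at he he'
          rcases hΦ x y he with ⟨p, _, h1, h2⟩ | ⟨p, _, h1, h2⟩ <;>
            rcases hΦ x' y' he' with ⟨p', _, h1', h2'⟩ | ⟨p', _, h1', h2'⟩
          · rw [h1, h1'] at heq
            rw [h2, h2', Sum.inl_injective heq]
          · rw [h1, h1'] at heq; exact absurd heq (by simp)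
          · rw [h1, h1'] at heq; exact absurd heq (by simp)
          · rw [h1, h1'] at heq
            rw [h2, h2', Sum.inr_injective heq]
    calc U.edgeFinset.card ≤ (T₁.edgeFinset.map ⟨Sum.inl, Sum.inl_injective⟩ ∪
        (T₂.edgeFinset.filter Touch).map ⟨Sum.inr, Sum.inr_injective⟩).card :=
          Finset.card_le_card_of_injOn Φ hsub hinjΦ
      _ ≤ T₁.edgeFinset.card + (T₂.edgeFinset.filter Touch).card := by
          refine (Finset.card_union_le _ _).trans ?_
          rw [Finset.card_map, Finset.card_map]
  -- internal edges of E
  have hG'conn := induced_connected hT₁ hT₂ hR hRmax ⟨(a₁, y₁), hp₁⟩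
  haveI : Fintype ↥(↑E : Set V₂) := Fintype.ofFinite _
  haveI : Fintype ↑(T₂.induce (↑E : Set V₂)).edgeSet := Fintype.ofFinite _
  have hle1 : Fintype.card ↥(↑E : Set V₂) ≤ (T₂.induce (↑E : Set V₂)).edgeFinset.card + 1 :=
    card_le_of_connected hG'conn
  have hcardE : Fintype.card ↥(↑E : Set V₂) = E.card := by
    simp [Finset.coe_sort_coe]
  have hle2 : E.card ≤ (T₂.edgeFinset.filter (fun e => ¬ Touch e)).card + 1 := by
    have hmapsG' : ∀ e ∈ (T₂.induce (↑E : Set V₂)).edgeFinset,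
        Sym2.map Subtype.val e ∈ T₂.edgeFinset.filter (fun e => ¬ Touch e) := by
      intro e he
      revert he
      induction e using Sym2.ind with
      | _ u v =>
        intro he
        rw [SimpleGraph.mem_edgeFinset, SimpleGraph.mem_edgeSet] at he
        rw [Sym2.map_pair_eq, Finset.mem_filter]
        refine ⟨SimpleGraph.mem_edgeFinset.2 he, ?_⟩
        intro ht
        apply ht
        intro w hw
        rcases Sym2.mem_iff.1 hw with rfl | rfl
        · exact Finset.mem_coe.1 u.prop
        · exact Finset.mem_coe.1 v.prop
    have hinj' : Set.InjOn (Sym2.map (Subtype.val : ↥(↑E : Set V₂) → V₂))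
        ↑(T₂.induce (↑E : Set V₂)).edgeFinset :=
      fun e _ e' _ h => Sym2.map.injective Subtype.val_injective h
    have := Finset.card_le_card_of_injOn _ hmapsG' hinj'
    omega
  have hfilter : (T₂.edgeFinset.filter Touch).card +
      (T₂.edgeFinset.filter (fun e => ¬ Touch e)).card = T₂.edgeFinset.card :=
    Finset.card_filter_add_card_filter_not _
  have hT₁edges : T₁.edgeFinset.card + 1 = Fintype.card V₁ := hT₁.card_edgeFinset
  have hT₂edges : T₂.edgeFinset.card + 1 = Fintype.card V₂ := hT₂.card_edgeFinset
  have hcardW : Fintype.card W = Fintype.card V₁ + Fintype.card {v : V₂ // v ∉ E} :=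
    Fintype.card_sum
  have hsub2 : Fintype.card {v : V₂ // v ∈ E} + Fintype.card {v : V₂ // v ∉ E} =
      Fintype.card V₂ := by
    rw [← Fintype.card_sum]
    exact Fintype.card_congr (Equiv.sumCompl _)
  have hcardE2 : Fintype.card {v : V₂ // v ∈ E} = E.card := Fintype.card_coe E
  have hcards : U.edgeFinset.card + 1 ≤ Fintype.card W := by omega
  have hUtree : U.IsTree := isTree_of_connected_of_card_le hUconn hcards
  refine ⟨W, inferInstance, U, hUtree, ⟨⟨Sum.inl,
      isometric_embedding_of_tree hT₁ hUtree.2 Sum.inl_injective h₁adj⟩,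
      ⟨g, isometric_embedding_of_tree hT₂ hUtree.2 hginj hgadj⟩⟩, ?_⟩
  -- minimality
  intro W' hW' U' hU'
  haveI := Fintype.ofFinite W'
  obtain ⟨⟨ψ₁, hψ₁a, hψ₁d⟩, ⟨ψ₂, hψ₂a, hψ₂d⟩⟩ := hU'
  have hinj1 : Function.Injective ψ₁ := by
    intro x x' h
    have hd := hψ₁d x x'
    rw [h, SimpleGraph.edist_self] at hd
    exact SimpleGraph.edist_eq_zero_iff.1 hd
  have hinj2 : Function.Injective ψ₂ := by
    intro x x' h
    have hd := hψ₂d x x'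
    rw [h, SimpleGraph.edist_self] at hd
    exact SimpleGraph.edist_eq_zero_iff.1 hd
  set R' : Finset (V₁ × V₂) := Finset.univ.filter (fun p => ψ₁ p.1 = ψ₂ p.2) with hR'
  have hgood' : GoodR T₁ T₂ R' := by
    intro p hp q hq
    have hp' : ψ₁ p.1 = ψ₂ p.2 := (Finset.mem_filter.1 hp).2
    have hq' : ψ₁ q.1 = ψ₂ q.2 := (Finset.mem_filter.1 hq).2
    have e1 : T₁.edist p.1 q.1 = T₂.edist p.2 q.2 := by
      rw [hψ₁d p.1 q.1, hp', hq', ← hψ₂d]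
    simp only [SimpleGraph.dist]
    rw [e1]
  have hcardR' : Fintype.card V₁ + Fintype.card V₂ ≤ Fintype.card W' + R'.card := by
    set I₁ := Finset.univ.image ψ₁ with hI₁
    set I₂ := Finset.univ.image ψ₂ with hI₂
    have c1 : I₁.card = Fintype.card V₁ := by
      rw [hI₁, Finset.card_image_of_injective _ hinj1, Finset.card_univ]
    have c2 : I₂.card = Fintype.card V₂ := by
      rw [hI₂, Finset.card_image_of_injective _ hinj2, Finset.card_univ]
    have c3 : (I₁ ∪ I₂).card ≤ Fintype.card W' := by
      rw [← Finset.card_univ]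
      exact Finset.card_le_card (Finset.subset_univ _)
    have c4 : (I₁ ∪ I₂).card + (I₁ ∩ I₂).card = I₁.card + I₂.card :=
      Finset.card_union_add_card_inter _ _
    have c5 : (I₁ ∩ I₂).card ≤ R'.card := by
      have hex : ∀ w : W', ∃ p : V₁ × V₂, w ∈ I₁ ∩ I₂ → p ∈ R' ∧ ψ₁ p.1 = w := by
        intro w
        by_cases hw : w ∈ I₁ ∩ I₂
        · obtain ⟨x, _, hx⟩ := Finset.mem_image.1 (Finset.mem_inter.1 hw).1
          obtain ⟨y, _, hy⟩ := Finset.mem_image.1 (Finset.mem_inter.1 hw).2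
          exact ⟨(x, y), fun _ => ⟨Finset.mem_filter.2 ⟨Finset.mem_univ _, by rw [hx, hy]⟩, hx⟩⟩
        · exact ⟨(a₀, b₀), fun h => absurd h hw⟩
      choose F hF using hex
      apply Finset.card_le_card_of_injOn F (fun w hw => (hF w hw).1)
      intro w hw w' hw' h
      rw [← (hF w (Finset.mem_coe.1 hw)).2, ← (hF w' (Finset.mem_coe.1 hw')).2, h]
    omega
  have hRR' := hRmax R' hgood'
  have hEcard : E.card = R.card := by
    rw [hE]
    apply Finset.card_image_of_injOn
    intro p hp q hq h
    exact Prod.ext (hfun₂ p.1 q.1 p.2 hp (h ▸ hq)) h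
  rw [Nat.card_eq_fintype_card, Nat.card_eq_fintype_card]
  omega
end

section
/- Let G and H be graphs with connected components G_1,…,G_s and H_1,…,H_r respectively. For each pair (i,j), let opt(G_i,H_j) denote the minimum number of vertices of an isometric-universal graph for {G_i,H_j}, and set w(i,j) = |V(G_i)| + |V(H_j)| − opt(G_i,H_j). Then for every matching M ⊆ {1,…,s}×{1,…,r} (a set of pairs in which all first coordinates are pairwise distinct and all second coordinates are pairwise distinct), there exists an isometric-universal graph for {G,H} with exactly |V(G)| + |V(H)| − Σ_{(i,j)∈M} w(i,j) vertices. -/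
open SimpleGraph

/-- The minimum number of vertices of an isometric-universal graph for `{G, H}`. -/
noncomputable def optPair {V W : Type} (G : SimpleGraph V) (H : SimpleGraph W) : ℕ :=
  sInf {n : ℕ | ∃ U : SimpleGraph (Fin n), IsIsoUniversalPair G H U}

/-- The weight `w(i,j) = |V(G_i)| + |V(H_j)| - opt(G_i, H_j)` associated with a pair of
connected components `c` of `G` and `d` of `H`. -/
noncomputable def compWeight {V W : Type} (G : SimpleGraph V) (H : SimpleGraph W)
    (c : G.ConnectedComponent) (d : H.ConnectedComponent) : ℕ :=
  Nat.card c.supp + Nat.card d.supp - optPair (G.induce c.supp) (H.induce d.supp)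

/-- `M` is a matching between connected components: all first coordinates are pairwise
distinct and all second coordinates are pairwise distinct. -/
def IsCompMatching {V W : Type} {G : SimpleGraph V} {H : SimpleGraph W}
    (M : Finset (G.ConnectedComponent × H.ConnectedComponent)) : Prop :=
  (∀ p ∈ M, ∀ q ∈ M, p.1 = q.1 → p = q) ∧ (∀ p ∈ M, ∀ q ∈ M, p.2 = q.2 → p = q)

namespace Stmt4Aux

variable {ι : Type} {α : ι → Type}

/-- Disjoint (sigma) sum of a family of graphs. -/
def SG (A : ∀ i, SimpleGraph (α i)) : SimpleGraph (Σ i, α i) where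
  Adj x y := ∃ i a b, (A i).Adj a b ∧ x = ⟨i, a⟩ ∧ y = ⟨i, b⟩
  symm := by constructor; rintro _ _ ⟨i, a, b, h, rfl, rfl⟩; exact ⟨i, b, a, h.symm, rfl, rfl⟩
  loopless := by
    constructor
    rintro _ ⟨i, a, b, h, rfl, heq⟩
    obtain ⟨-, h2⟩ := Sigma.mk.inj_iff.mp heq
    exact (A i).loopless.irrefl a (eq_of_heq h2 ▸ h)

lemma SG_adj_same {A : ∀ i, SimpleGraph (α i)} {i : ι} {a b : α i} :
    (SG A).Adj ⟨i, a⟩ ⟨i, b⟩ ↔ (A i).Adj a b := by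
  constructor
  · rintro ⟨j, a', b', h, h1, h2⟩
    obtain ⟨rfl, ha⟩ := Sigma.mk.inj_iff.mp h1
    obtain ⟨-, hb⟩ := Sigma.mk.inj_iff.mp h2
    exact (eq_of_heq ha) ▸ (eq_of_heq hb) ▸ h
  · intro h; exact ⟨i, a, b, h, rfl, rfl⟩

lemma SG_walk_fst {A : ∀ i, SimpleGraph (α i)} :
    ∀ {x y : Σ i, α i}, (SG A).Walk x y → x.1 = y.1 := by
  intro x y w
  induction w with
  | nil => rfl
  | cons h p ih =>
    obtain ⟨i, a, b, -, rfl, rfl⟩ := h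
    exact ih

lemma SG_walk_proj {A : ∀ i, SimpleGraph (α i)} :
    ∀ {x y : Σ i, α i}, (w : (SG A).Walk x y) → ∀ (i : ι) (a b : α i),
      x = ⟨i, a⟩ → y = ⟨i, b⟩ → ∃ w' : (A i).Walk a b, w'.length = w.length := by
  intro x y w
  induction w with
  | nil =>
    intro i a b hx hy
    obtain ⟨-, ha⟩ := Sigma.mk.inj_iff.mp (hx.symm.trans hy)
    exact (eq_of_heq ha) ▸ ⟨Walk.nil, rfl⟩
  | cons h p ih =>
    intro i a b hx hy
    obtain ⟨j, a', b', hab, h1, h2⟩ := h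
    subst hx
    obtain ⟨rfl, ha⟩ := Sigma.mk.inj_iff.mp h1
    obtain rfl := eq_of_heq ha
    subst h2
    obtain ⟨w', hw'⟩ := ih i b' b rfl hy
    exact ⟨Walk.cons hab w', by simp [hw']; rfl⟩

variable {A : ∀ i, SimpleGraph (α i)}

lemma edist_le_of_adj_map {V W : Type} {G : SimpleGraph V} {U : SimpleGraph W} {f : V → W}
    (hf : ∀ u v, G.Adj u v → U.Adj (f u) (f v)) (u v : V) :
    U.edist (f u) (f v) ≤ G.edist u v := by
  rcases eq_or_ne (G.edist u v) ⊤ with h | h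
  · exact h ▸ le_top
  · obtain ⟨p, hp⟩ := exists_walk_of_edist_ne_top h
    calc U.edist (f u) (f v) ≤ (p.map ⟨f, fun {a b} hab => hf a b hab⟩).length := edist_le _
      _ = (p.length : ℕ∞) := by rw [Walk.length_map]
      _ = G.edist u v := hp

lemma SG_edist_same (i : ι) (a b : α i) :
    (SG A).edist ⟨i, a⟩ ⟨i, b⟩ = (A i).edist a b := by
  refine le_antisymm ?_ ?_
  · exact edist_le_of_adj_map (f := fun x => (⟨i, x⟩ : Σ i, α i))
      (fun u v h => SG_adj_same.mpr h) a b
  · rcases eq_or_ne ((SG A).edist ⟨i, a⟩ ⟨i, b⟩) ⊤ with h | h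
    · exact h ▸ le_top
    · obtain ⟨p, hp⟩ := exists_walk_of_edist_ne_top h
      obtain ⟨w', hw'⟩ := SG_walk_proj p i a b rfl rfl
      calc (A i).edist a b ≤ (w'.length : ℕ∞) := edist_le _
        _ = (p.length : ℕ∞) := by rw [hw']
        _ = _ := hp

lemma SG_edist_ne (i j : ι) (hij : i ≠ j) (a : α i) (b : α j) :
    (SG A).edist ⟨i, a⟩ ⟨j, b⟩ = ⊤ := by
  apply edist_eq_top_of_not_reachable
  intro hr
  obtain ⟨p⟩ := hr
  exact hij (SG_walk_fst p)

lemma emb_id {V : Type} (G : SimpleGraph V) : IsIsometricEmbedding G G id :=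
  ⟨fun _ _ h => h, fun _ _ => rfl⟩

lemma emb_comp {V W X : Type} {G : SimpleGraph V} {U : SimpleGraph W} {U' : SimpleGraph X}
    {φ : V → W} {ψ : W → X} (h1 : IsIsometricEmbedding G U φ)
    (h2 : IsIsometricEmbedding U U' ψ) : IsIsometricEmbedding G U' (ψ ∘ φ) :=
  ⟨fun u v h => h2.1 _ _ (h1.1 _ _ h), fun u v => (h1.2 u v).trans (h2.2 _ _)⟩

lemma iso_emb {V W : Type} {G : SimpleGraph V} {G' : SimpleGraph W} (e : G ≃g G') :
    IsIsometricEmbedding G G' e := by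
  refine ⟨fun u v h => e.map_rel_iff.mpr h, fun u v => le_antisymm ?_ ?_⟩
  · have := edist_le_of_adj_map (f := ⇑e.symm)
      (fun u v h => e.symm.map_rel_iff.mpr h) (e u) (e v)
    simpa using this
  · exact edist_le_of_adj_map (fun u v h => e.map_rel_iff.mpr h) u v

lemma univ_congr {V₁ V₂ W X : Type} {G₁ : SimpleGraph V₁} {G₂ : SimpleGraph V₂}
    {U : SimpleGraph W} {U' : SimpleGraph X} (h : IsIsoUniversalPair G₁ G₂ U)
    (e : U ≃g U') : IsIsoUniversalPair G₁ G₂ U' := by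
  obtain ⟨⟨φ, hφ⟩, ⟨ψ, hψ⟩⟩ := h
  exact ⟨⟨e ∘ φ, emb_comp hφ (iso_emb e)⟩, ⟨e ∘ ψ, emb_comp hψ (iso_emb e)⟩⟩

/-- transport a graph along an equivalence of vertex types -/
def equivIso {X Y : Type} (e : X ≃ Y) (U : SimpleGraph X) :
    U ≃g U.comap e.symm :=
  ⟨e, by intro a b; simp [SimpleGraph.comap]⟩

/-- the fiber embedding into the sigma graph -/
lemma emb_fiber (A : ∀ i, SimpleGraph (α i)) (i : ι) :
    IsIsometricEmbedding (A i) (SG A) (fun a => ⟨i, a⟩) :=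
  ⟨fun u v h => SG_adj_same.mpr h, fun u v => (SG_edist_same i u v).symm⟩

/-- The main gluing lemma: fiberwise isometric embeddings along an injective index map
give an isometric embedding of sigma graphs. -/
lemma emb_sigma {κ : Type} {γ : κ → Type} {B : ∀ i, SimpleGraph (α i)}
    {U : ∀ k, SimpleGraph (γ k)} {τ : ι → κ} (hτ : Function.Injective τ)
    {φ : ∀ i, α i → γ (τ i)} (hφ : ∀ i, IsIsometricEmbedding (B i) (U (τ i)) (φ i)) :
    IsIsometricEmbedding (SG B) (SG U) (fun x => ⟨τ x.1, φ x.1 x.2⟩) := by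
  constructor
  · rintro _ _ ⟨i, a, b, hab, rfl, rfl⟩
    exact ⟨τ i, φ i a, φ i b, (hφ i).1 _ _ hab, rfl, rfl⟩
  · rintro ⟨i, a⟩ ⟨j, b⟩
    rcases eq_or_ne i j with rfl | hij
    · rw [SG_edist_same, SG_edist_same, (hφ i).2]
    · rw [SG_edist_ne i j hij, SG_edist_ne _ _ (fun h => hij (hτ h))]

/-- The components equivalence. -/
def compEquiv {V : Type} (G : SimpleGraph V) :
    (Σ c : G.ConnectedComponent, c.supp) ≃ V where
  toFun x := x.2.1
  invFun v := ⟨G.connectedComponentMk v, ⟨v, rfl⟩⟩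
  left_inv := by rintro ⟨c, v, rfl⟩; rfl
  right_inv v := rfl

def compIso {V : Type} (G : SimpleGraph V) :
    SG (fun c : G.ConnectedComponent => G.induce c.supp) ≃g G := by
  refine ⟨compEquiv G, ?_⟩
  rintro ⟨c, a⟩ ⟨d, b⟩
  constructor
  · intro h
    have hcd : c = d := by
      have h1 : G.connectedComponentMk a.1 = c := a.2
      have h2 : G.connectedComponentMk b.1 = d := b.2
      rw [← h1, ← h2]
      exact ConnectedComponent.sound h.reachable
    subst hcd
    obtain ⟨a, ha⟩ := a
    obtain ⟨b, hb⟩ := b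
    exact ⟨c, ⟨a, ha⟩, ⟨b, hb⟩, h, rfl, rfl⟩
  · rintro ⟨e, a', b', hab, h1, h2⟩
    obtain ⟨rfl, ha⟩ := Sigma.mk.inj_iff.mp h1
    obtain ⟨hdc, hb⟩ := Sigma.mk.inj_iff.mp h2
    subst hdc
    obtain rfl := eq_of_heq ha
    obtain rfl := eq_of_heq hb
    exact hab

section OptPair

variable {V₁ V₂ : Type}

def boolFam (V₁ V₂ : Type) : Bool → Type := fun b => cond b V₁ V₂

def boolGr (G₁ : SimpleGraph V₁) (G₂ : SimpleGraph V₂) :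
    ∀ b, SimpleGraph (boolFam V₁ V₂ b) := fun b =>
  match b with
  | true => G₁
  | false => G₂

def boolEquiv (V₁ V₂ : Type) : (Σ b, boolFam V₁ V₂ b) ≃ V₁ ⊕ V₂ where
  toFun x := match x with
    | ⟨true, x⟩ => .inl x
    | ⟨false, x⟩ => .inr x
  invFun x := match x with
    | .inl x => ⟨true, x⟩
    | .inr x => ⟨false, x⟩
  left_inv := by rintro ⟨(_|_), x⟩ <;> rfl
  right_inv := by rintro (x | x) <;> rfl

lemma mem_univSet [Finite V₁] [Finite V₂] (G₁ : SimpleGraph V₁) (G₂ : SimpleGraph V₂) :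
    (Nat.card V₁ + Nat.card V₂) ∈
      {n : ℕ | ∃ U : SimpleGraph (Fin n), IsIsoUniversalPair G₁ G₂ U} := by
  haveI : ∀ b, Finite (boolFam V₁ V₂ b) := fun b => by
    cases b
    · exact inferInstanceAs (Finite V₂)
    · exact inferInstanceAs (Finite V₁)
  haveI : Finite (Σ b, boolFam V₁ V₂ b) := inferInstance
  letI : Fintype (Σ b, boolFam V₁ V₂ b) := Fintype.ofFinite _
  have hcard : Fintype.card (Σ b, boolFam V₁ V₂ b) = Nat.card V₁ + Nat.card V₂ := by
    rw [← Nat.card_eq_fintype_card, Nat.card_congr (boolEquiv V₁ V₂), Nat.card_sum]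
  let e : (Σ b, boolFam V₁ V₂ b) ≃ Fin (Nat.card V₁ + Nat.card V₂) :=
    Fintype.equivFinOfCardEq hcard
  refine ⟨(SG (boolGr G₁ G₂)).comap e.symm, ?_⟩
  have huniv : IsIsoUniversalPair G₁ G₂ (SG (boolGr G₁ G₂)) :=
    ⟨⟨_, emb_fiber (boolGr G₁ G₂) true⟩, ⟨_, emb_fiber (boolGr G₁ G₂) false⟩⟩
  exact univ_congr huniv (equivIso e _)

lemma optPair_le [Finite V₁] [Finite V₂] (G₁ : SimpleGraph V₁) (G₂ : SimpleGraph V₂) :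
    optPair G₁ G₂ ≤ Nat.card V₁ + Nat.card V₂ :=
  Nat.sInf_le (mem_univSet G₁ G₂)

lemma optPair_spec [Finite V₁] [Finite V₂] (G₁ : SimpleGraph V₁) (G₂ : SimpleGraph V₂) :
    ∃ U : SimpleGraph (Fin (optPair G₁ G₂)), IsIsoUniversalPair G₁ G₂ U :=
  Nat.sInf_mem (Set.nonempty_of_mem (mem_univSet G₁ G₂))

end OptPair

/-- generic splitting of a sigma over a sum type -/
def sigSumEquiv {X Y : Type} (f : X ⊕ Y → Type) :
    (Σ x, f x) ≃ (Σ x : X, f (.inl x)) ⊕ (Σ y : Y, f (.inr y)) where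
  toFun x := match x with
    | ⟨.inl a, v⟩ => .inl ⟨a, v⟩
    | ⟨.inr b, v⟩ => .inr ⟨b, v⟩
  invFun y := match y with
    | .inl ⟨a, v⟩ => ⟨.inl a, v⟩
    | .inr ⟨b, v⟩ => ⟨.inr b, v⟩
  left_inv := by rintro ⟨(a | b), v⟩ <;> rfl
  right_inv := by rintro (⟨a, v⟩ | ⟨b, v⟩) <;> rfl

/-- generic splitting of a sigma by a predicate on the index -/
def sigmaSplit {X : Type} (P : X → Prop) [DecidablePred P] (f : X → Type) :
    (Σ x, f x) ≃ (Σ x : {x // P x}, f x.1) ⊕ (Σ x : {x // ¬P x}, f x.1) where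
  toFun x := if h : P x.1 then .inl ⟨⟨x.1, h⟩, x.2⟩ else .inr ⟨⟨x.1, h⟩, x.2⟩
  invFun y := match y with
    | .inl ⟨x, a⟩ => ⟨x.1, a⟩
    | .inr ⟨x, a⟩ => ⟨x.1, a⟩
  left_inv := by rintro ⟨x, a⟩; by_cases h : P x <;> simp [h]
  right_inv := by rintro (⟨⟨x, h⟩, a⟩ | ⟨⟨x, h⟩, a⟩) <;> simp [h]

section Main

attribute [local instance] Classical.propDecidable

variable {V W : Type} [Fintype V] [Fintype W] {G : SimpleGraph V} {H : SimpleGraph W}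
  (M : Finset (G.ConnectedComponent × H.ConnectedComponent))

def MatchedG (c : G.ConnectedComponent) : Prop := ∃ p ∈ M, p.1 = c

def MatchedH (d : H.ConnectedComponent) : Prop := ∃ p ∈ M, p.2 = d

abbrev Idx : Type :=
  {p // p ∈ M} ⊕ {c : G.ConnectedComponent // ¬ MatchedG M c} ⊕
    {d : H.ConnectedComponent // ¬ MatchedH M d}

instance : Finite (Idx M) := by unfold Idx; infer_instance

def gam : Idx M → Type
  | .inl p => Fin (optPair (G.induce p.1.1.supp) (H.induce p.1.2.supp))
  | .inr (.inl c) => c.1.supp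
  | .inr (.inr d) => d.1.supp

instance : ∀ k, Finite (gam M k) := fun k => by
  rcases k with p | (c | d)
  · exact inferInstanceAs (Finite (Fin _))
  · exact inferInstanceAs (Finite c.1.supp)
  · exact inferInstanceAs (Finite d.1.supp)

noncomputable def Ugr : ∀ k : Idx M, SimpleGraph (gam M k)
  | .inl p => (optPair_spec (G.induce p.1.1.supp) (H.induce p.1.2.supp)).choose
  | .inr (.inl c) => G.induce c.1.supp
  | .inr (.inr d) => H.induce d.1.supp

lemma Ugr_spec (p : {p // p ∈ M}) :
    IsIsoUniversalPair (G.induce p.1.1.supp) (H.induce p.1.2.supp) (Ugr M (.inl p)) :=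
  (optPair_spec (G.induce p.1.1.supp) (H.induce p.1.2.supp)).choose_spec

noncomputable def tauG (c : G.ConnectedComponent) : Idx M :=
  if h : MatchedG M c then .inl ⟨h.choose, h.choose_spec.1⟩ else .inr (.inl ⟨c, h⟩)

noncomputable def tauH (d : H.ConnectedComponent) : Idx M :=
  if h : MatchedH M d then .inl ⟨h.choose, h.choose_spec.1⟩ else .inr (.inr ⟨d, h⟩)

lemma tauG_inj : Function.Injective (tauG M) := by
  intro c c' h
  unfold tauG at h
  by_cases h1 : MatchedG M c <;> by_cases h2 : MatchedG M c'
  · rw [dif_pos h1, dif_pos h2] at h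
    injection h with h
    rw [← h1.choose_spec.2, ← h2.choose_spec.2]
    exact congrArg (fun x : {p // p ∈ M} => x.1.1) h
  · rw [dif_pos h1, dif_neg h2] at h
    cases h
  · rw [dif_neg h1, dif_pos h2] at h
    cases h
  · rw [dif_neg h1, dif_neg h2] at h
    injection h with h
    injection h with h
    exact congrArg Subtype.val h

lemma tauH_inj : Function.Injective (tauH M) := by
  intro c c' h
  unfold tauH at h
  by_cases h1 : MatchedH M c <;> by_cases h2 : MatchedH M c'
  · rw [dif_pos h1, dif_pos h2] at h
    injection h with h
    rw [← h1.choose_spec.2, ← h2.choose_spec.2]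
    exact congrArg (fun x : {p // p ∈ M} => x.1.2) h
  · rw [dif_pos h1, dif_neg h2] at h
    cases h
  · rw [dif_neg h1, dif_pos h2] at h
    cases h
  · rw [dif_neg h1, dif_neg h2] at h
    injection h with h
    injection h with h
    exact congrArg Subtype.val h

lemma emb_inlG (p : {p // p ∈ M}) (c : G.ConnectedComponent) (hc : p.1.1 = c) :
    ∃ φ : c.supp → gam M (.inl p),
      IsIsometricEmbedding (G.induce c.supp) (Ugr M (.inl p)) φ := by
  subst hc; exact (Ugr_spec M p).1

lemma emb_inlH (p : {p // p ∈ M}) (d : H.ConnectedComponent) (hd : p.1.2 = d) :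
    ∃ φ : d.supp → gam M (.inl p),
      IsIsometricEmbedding (H.induce d.supp) (Ugr M (.inl p)) φ := by
  subst hd; exact (Ugr_spec M p).2

lemma phiG (c : G.ConnectedComponent) :
    ∃ φ : c.supp → gam M (tauG M c),
      IsIsometricEmbedding (G.induce c.supp) (Ugr M (tauG M c)) φ := by
  by_cases h : MatchedG M c
  · unfold tauG
    rw [dif_pos h]
    exact emb_inlG M ⟨h.choose, h.choose_spec.1⟩ c h.choose_spec.2
  · unfold tauG
    rw [dif_neg h]
    exact ⟨id, emb_id _⟩

lemma phiH (d : H.ConnectedComponent) :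
    ∃ φ : d.supp → gam M (tauH M d),
      IsIsometricEmbedding (H.induce d.supp) (Ugr M (tauH M d)) φ := by
  by_cases h : MatchedH M d
  · unfold tauH
    rw [dif_pos h]
    exact emb_inlH M ⟨h.choose, h.choose_spec.1⟩ d h.choose_spec.2
  · unfold tauH
    rw [dif_neg h]
    exact ⟨id, emb_id _⟩

lemma embG : ∃ φ : V → Σ k, gam M k, IsIsometricEmbedding G (SG (Ugr M)) φ := by
  have hsig := emb_sigma (B := fun c : G.ConnectedComponent => G.induce c.supp)
    (U := Ugr M) (tauG_inj M) (φ := fun c => (phiG M c).choose)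
    (fun c => (phiG M c).choose_spec)
  exact ⟨_, emb_comp (iso_emb (compIso G).symm) hsig⟩

lemma embH : ∃ φ : W → Σ k, gam M k, IsIsometricEmbedding H (SG (Ugr M)) φ := by
  have hsig := emb_sigma (B := fun d : H.ConnectedComponent => H.induce d.supp)
    (U := Ugr M) (tauH_inj M) (φ := fun d => (phiH M d).choose)
    (fun d => (phiH M d).choose_spec)
  exact ⟨_, emb_comp (iso_emb (compIso H).symm) hsig⟩


lemma nat_card_sigma {X : Type} [Fintype X] (f : X → Type) [∀ x, Finite (f x)] :
    Nat.card (Σ x, f x) = ∑ x, Nat.card (f x) := by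
  letI : ∀ x, Fintype (f x) := fun x => Fintype.ofFinite _
  rw [Nat.card_eq_fintype_card, Fintype.card_sigma]
  exact Finset.sum_congr rfl fun x _ => (Nat.card_eq_fintype_card).symm

noncomputable def eMatchG (hM1 : ∀ p ∈ M, ∀ q ∈ M, p.1 = q.1 → p = q) :
    {c : G.ConnectedComponent // MatchedG M c} ≃ {p // p ∈ M} where
  toFun c := ⟨c.2.choose, c.2.choose_spec.1⟩
  invFun p := ⟨p.1.1, ⟨p.1, p.2, rfl⟩⟩
  left_inv c := Subtype.ext c.2.choose_spec.2
  right_inv := by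
    rintro ⟨p, hp⟩
    apply Subtype.ext
    have h : MatchedG M p.1 := ⟨p, hp, rfl⟩
    exact hM1 _ h.choose_spec.1 p hp h.choose_spec.2

noncomputable def eMatchH (hM2 : ∀ p ∈ M, ∀ q ∈ M, p.2 = q.2 → p = q) :
    {d : H.ConnectedComponent // MatchedH M d} ≃ {p // p ∈ M} where
  toFun d := ⟨d.2.choose, d.2.choose_spec.1⟩
  invFun p := ⟨p.1.2, ⟨p.1, p.2, rfl⟩⟩
  left_inv d := Subtype.ext d.2.choose_spec.2
  right_inv := by
    rintro ⟨p, hp⟩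
    apply Subtype.ext
    have h : MatchedH M p.2 := ⟨p, hp, rfl⟩
    exact hM2 _ h.choose_spec.1 p hp h.choose_spec.2

lemma card_gam (hM : IsCompMatching M) :
    Nat.card (Σ k, gam M k) =
      Nat.card V + Nat.card W - ∑ p ∈ M, compWeight G H p.1 p.2 := by
  classical
  -- the three pieces
  set B := Nat.card (Σ c : {c : G.ConnectedComponent // ¬ MatchedG M c}, c.1.supp) with hB
  set C := Nat.card (Σ d : {d : H.ConnectedComponent // ¬ MatchedH M d}, d.1.supp) with hC
  -- split the total
  have h1 : Nat.card (Σ k, gam M k)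
      = (∑ p ∈ M, optPair (G.induce p.1.supp) (H.induce p.2.supp)) + B + C := by
    have e1 := sigSumEquiv (gam M)
    rw [Nat.card_congr e1, Nat.card_sum, Nat.card_congr (sigSumEquiv (fun x => gam M (.inr x))),
      Nat.card_sum]
    have hA : Nat.card (Σ p : {p // p ∈ M}, gam M (.inl p))
        = ∑ p ∈ M, optPair (G.induce p.1.supp) (H.induce p.2.supp) := by
      rw [nat_card_sigma]
      rw [Finset.univ_eq_attach, ← Finset.sum_attach M
        (fun p => optPair (G.induce p.1.supp) (H.induce p.2.supp))]
      refine Finset.sum_congr rfl fun p _ => ?_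
      have : gam M (.inl p) = Fin (optPair (G.induce p.1.1.supp) (H.induce p.1.2.supp)) := rfl
      rw [this, Nat.card_eq_fintype_card, Fintype.card_fin]
    rw [hA, ← Nat.add_assoc]
    rfl
  -- cardinality of V
  have hV : Nat.card V = (∑ p ∈ M, Nat.card p.1.supp) + B := by
    rw [← Nat.card_congr (compEquiv G),
      Nat.card_congr (sigmaSplit (MatchedG M) (fun c => c.supp)), Nat.card_sum]
    congr 1
    have e2 : (Σ c : {c : G.ConnectedComponent // MatchedG M c}, c.1.supp)
        ≃ (Σ p : {p // p ∈ M}, p.1.1.supp) :=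
      (Equiv.sigmaCongrRight fun c : {c : G.ConnectedComponent // MatchedG M c} =>
        Equiv.setCongr (congrArg ConnectedComponent.supp c.2.choose_spec.2.symm)).trans
        (Equiv.sigmaCongrLeft (β := fun p : {p // p ∈ M} => p.1.1.supp) (eMatchG M hM.1))
    rw [Nat.card_congr e2, nat_card_sigma, Finset.univ_eq_attach,
      ← Finset.sum_attach M (fun p => Nat.card p.1.supp)]
  -- cardinality of W
  have hW : Nat.card W = (∑ p ∈ M, Nat.card p.2.supp) + C := by
    rw [← Nat.card_congr (compEquiv H),
      Nat.card_congr (sigmaSplit (MatchedH M) (fun d => d.supp)), Nat.card_sum]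
    congr 1
    have e2 : (Σ d : {d : H.ConnectedComponent // MatchedH M d}, d.1.supp)
        ≃ (Σ p : {p // p ∈ M}, p.1.2.supp) :=
      (Equiv.sigmaCongrRight fun d : {d : H.ConnectedComponent // MatchedH M d} =>
        Equiv.setCongr (congrArg ConnectedComponent.supp d.2.choose_spec.2.symm)).trans
        (Equiv.sigmaCongrLeft (β := fun p : {p // p ∈ M} => p.1.2.supp) (eMatchH M hM.2))
    rw [Nat.card_congr e2, nat_card_sigma, Finset.univ_eq_attach,
      ← Finset.sum_attach M (fun p => Nat.card p.2.supp)]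
  -- the weight identity
  have hsum : (∑ p ∈ M, optPair (G.induce p.1.supp) (H.induce p.2.supp))
      + (∑ p ∈ M, compWeight G H p.1 p.2)
      = (∑ p ∈ M, Nat.card p.1.supp) + (∑ p ∈ M, Nat.card p.2.supp) := by
    rw [← Finset.sum_add_distrib, ← Finset.sum_add_distrib]
    refine Finset.sum_congr rfl fun p _ => ?_
    unfold compWeight
    exact Nat.add_sub_cancel' (optPair_le _ _)
  omega

end Main

end Stmt4Aux

/-- For every matching `M` between the components of `G` and of `H`
there is an isometric-universal graph for `{G, H}` with exactly
`|V(G)| + |V(H)| - ∑_{(i,j) ∈ M} w(i,j)` vertices. -/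
theorem stmt_4 {V W : Type} [Fintype V] [Fintype W]
    (G : SimpleGraph V) (H : SimpleGraph W)
    (M : Finset (G.ConnectedComponent × H.ConnectedComponent))
    (hM : IsCompMatching M) :
    ∃ U : SimpleGraph
        (Fin (Nat.card V + Nat.card W - ∑ p ∈ M, compWeight G H p.1 p.2)),
      IsIsoUniversalPair G H U := by
  classical
  have hcard := Stmt4Aux.card_gam M hM
  letI : Fintype (Σ k, Stmt4Aux.gam M k) := Fintype.ofFinite _
  let e : (Σ k, Stmt4Aux.gam M k) ≃
      Fin (Nat.card V + Nat.card W - ∑ p ∈ M, compWeight G H p.1 p.2) :=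
    Fintype.equivFinOfCardEq (by rw [← Nat.card_eq_fintype_card, hcard])
  exact ⟨_, Stmt4Aux.univ_congr ⟨Stmt4Aux.embG M, Stmt4Aux.embH M⟩ (Stmt4Aux.equivIso e _)⟩
end

section
/- Let U be a minimum and minimal isometric-universal graph for {G,H}, where G and H have connected components G_1,…,G_s and H_1,…,H_r with s ≤ r, and fix isometric embeddings of G and of H into U. Let D be the set of pairs (i,j) such that the images of G_i and of H_j lie in the same connected component of U. Then D is a matching of size s (all first coordinates distinct, all second coordinates distinct), and |V(U)| = |V(G)| + |V(H)| − Σ_{(i,j)∈D} (|V(G_i)| + |V(H_j)| − opt(G_i,H_j)), where opt(G_i,H_j) denotes the minimum number of vertices of an isometric-universal graph for {G_i,H_j}. -/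
open SimpleGraph

namespace IsoUnivAux

variable {α β : Type*}

lemma edist_le_walk {A : SimpleGraph α} {B : SimpleGraph β} (f : α → β)
    (hf : ∀ a b, A.Adj a b → B.Adj (f a) (f b) ∨ f a = f b) {a b : α} (p : A.Walk a b) :
    B.edist (f a) (f b) ≤ p.length := by
  induction p with
  | nil => simp [SimpleGraph.edist_self]
  | @cons u v w h q ih =>
      rw [SimpleGraph.Walk.length_cons]
      calc B.edist (f u) (f w) ≤ B.edist (f u) (f v) + B.edist (f v) (f w) :=
            SimpleGraph.edist_triangle
        _ ≤ 1 + q.length := by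
            gcongr
            rcases hf _ _ h with h' | h'
            · exact (SimpleGraph.edist_eq_one_iff_adj.mpr h').le
            · simp [h', SimpleGraph.edist_self]
        _ = (q.length + 1 : ℕ) := by push_cast; ring

lemma edist_le_of_map {A : SimpleGraph α} {B : SimpleGraph β} (f : α → β)
    (hf : ∀ a b, A.Adj a b → B.Adj (f a) (f b) ∨ f a = f b) (a b : α) :
    B.edist (f a) (f b) ≤ A.edist a b := by
  rcases eq_or_ne (A.edist a b) ⊤ with h | h
  · simp [h]
  · obtain ⟨p, hp⟩ := SimpleGraph.exists_walk_of_edist_ne_top h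
    rw [← hp]
    exact edist_le_walk f hf p

/-- If `S` is a union of connected components (closed under adjacency both ways),
the induced subgraph is isometric. -/
lemma edist_induce_of_closed {A : SimpleGraph α} {S : Set α}
    (hS : ∀ a b, A.Adj a b → (a ∈ S ↔ b ∈ S)) (a b : α) (ha : a ∈ S) (hb : b ∈ S) :
    (A.induce S).edist ⟨a, ha⟩ ⟨b, hb⟩ = A.edist a b := by
  classical
  refine le_antisymm ?_ ?_
  · have := edist_le_of_map (A := A) (B := A.induce S)
      (fun x => if h : x ∈ S then ⟨x, h⟩ else ⟨a, ha⟩) ?_ a b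
    · simpa [ha, hb] using this
    · intro x y hxy
      by_cases hx : x ∈ S
      · have hy : y ∈ S := (hS x y hxy).mp hx
        left
        simpa [hx, hy] using hxy
      · have hy : y ∉ S := fun h => hx ((hS x y hxy).mpr h)
        right
        simp [hx, hy]
  · exact edist_le_of_map (A := A.induce S) (B := A) Subtype.val
      (fun x y hxy => Or.inl hxy) ⟨a, ha⟩ ⟨b, hb⟩

lemma sum_edist_inl {A : SimpleGraph α} {B : SimpleGraph β} (a b : α) :
    (A ⊕g B).edist (Sum.inl a) (Sum.inl b) = A.edist a b := by
  refine le_antisymm ?_ ?_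
  · exact edist_le_of_map Sum.inl (fun x y hxy => Or.inl hxy) a b
  · have := edist_le_of_map (A := A ⊕g B) (B := A) (Sum.elim id fun _ => a) ?_
      (Sum.inl a) (Sum.inl b)
    · simpa using this
    · rintro (x | x) (y | y) hxy
      · exact Or.inl hxy
      · exact absurd hxy (by simp [SimpleGraph.sum])
      · exact absurd hxy (by simp [SimpleGraph.sum])
      · exact Or.inr rfl

lemma sum_edist_inr {A : SimpleGraph α} {B : SimpleGraph β} (a b : β) :
    (A ⊕g B).edist (Sum.inr a) (Sum.inr b) = B.edist a b := by
  refine le_antisymm ?_ ?_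
  · exact edist_le_of_map Sum.inr (fun x y hxy => Or.inl hxy) a b
  · have := edist_le_of_map (A := A ⊕g B) (B := B) (Sum.elim (fun _ => a) id) ?_
      (Sum.inr a) (Sum.inr b)
    · simpa using this
    · rintro (x | x) (y | y) hxy
      · exact Or.inr rfl
      · exact absurd hxy (by simp [SimpleGraph.sum])
      · exact absurd hxy (by simp [SimpleGraph.sum])
      · exact Or.inl hxy

lemma sum_edist_inl_inr {A : SimpleGraph α} {B : SimpleGraph β} (a : α) (b : β) :
    (A ⊕g B).edist (Sum.inl a) (Sum.inr b) = ⊤ := by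
  refine le_antisymm le_top ?_
  have := edist_le_of_map (A := A ⊕g B) (B := (⊥ : SimpleGraph Bool)) Sum.isLeft ?_
    (Sum.inl a) (Sum.inr b)
  · calc (⊤ : ℕ∞) = (⊥ : SimpleGraph Bool).edist true false :=
        (SimpleGraph.edist_bot_of_ne (by simp)).symm
      _ ≤ _ := by simpa using this
  · rintro (x | x) (y | y) hxy
    · exact Or.inr rfl
    · exact absurd hxy (by simp [SimpleGraph.sum])
    · exact absurd hxy (by simp [SimpleGraph.sum])
    · exact Or.inr rfl

end IsoUnivAux

namespace IsoUnivAux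

variable {V W X Y Z' : Type}

lemma closed_pred {G : SimpleGraph V} (P : G.ConnectedComponent → Prop) :
    ∀ a b, G.Adj a b → (P (G.connectedComponentMk a) ↔ P (G.connectedComponentMk b)) :=
  fun _ _ h => by rw [SimpleGraph.ConnectedComponent.connectedComponentMk_eq_of_adj h]

lemma supp_closed {G : SimpleGraph V} (c : G.ConnectedComponent) :
    ∀ a b, G.Adj a b → (a ∈ c.supp ↔ b ∈ c.supp) :=
  closed_pred (fun K => K = c)

lemma edist_eq_top_of_ne_comp {G : SimpleGraph V} {u v : V}
    (h : G.connectedComponentMk u ≠ G.connectedComponentMk v) : G.edist u v = ⊤ :=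
  SimpleGraph.edist_eq_top_of_not_reachable (fun hr => h (SimpleGraph.ConnectedComponent.eq.mpr hr))

lemma emb_injective {G : SimpleGraph V} {U : SimpleGraph X} {φ : V → X}
    (h : IsIsometricEmbedding G U φ) : Function.Injective φ := by
  intro a b hab
  have h2 := h.2 a b
  rw [hab, SimpleGraph.edist_self] at h2
  exact SimpleGraph.edist_eq_zero_iff.mp h2

/-- The hom underlying an isometric embedding. -/
def embHom {G : SimpleGraph V} {U : SimpleGraph X} {φ : V → X}
    (h : IsIsometricEmbedding G U φ) : G →g U :=
  ⟨φ, fun {a b} hab => h.1 a b hab⟩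

/-- The induced map on connected components. -/
def compMap {G : SimpleGraph V} {U : SimpleGraph X} {φ : V → X}
    (h : IsIsometricEmbedding G U φ) : G.ConnectedComponent → U.ConnectedComponent :=
  SimpleGraph.ConnectedComponent.map (embHom h)

lemma compMap_mk {G : SimpleGraph V} {U : SimpleGraph X} {φ : V → X}
    (h : IsIsometricEmbedding G U φ) (v : V) :
    compMap h (G.connectedComponentMk v) = U.connectedComponentMk (φ v) := rfl

lemma compMap_injective {G : SimpleGraph V} {U : SimpleGraph X} {φ : V → X}
    (h : IsIsometricEmbedding G U φ) : Function.Injective (compMap h) := by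
  intro c d
  refine SimpleGraph.ConnectedComponent.ind₂ (fun u v hne => ?_) c d
  rw [compMap_mk, compMap_mk, SimpleGraph.ConnectedComponent.eq] at hne
  have : G.edist u v ≠ ⊤ := by
    rw [h.2 u v]
    exact SimpleGraph.edist_ne_top_iff_reachable.mpr hne
  exact SimpleGraph.ConnectedComponent.eq.mpr (SimpleGraph.reachable_of_edist_ne_top this)

lemma mem_supp_compMap {G : SimpleGraph V} {U : SimpleGraph X} {φ : V → X}
    (h : IsIsometricEmbedding G U φ) {c : G.ConnectedComponent} {v : V} (hv : v ∈ c.supp) :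
    φ v ∈ (compMap h c).supp := by
  rw [SimpleGraph.ConnectedComponent.mem_supp_iff] at hv ⊢
  rw [← hv, compMap_mk]

/-- Restriction of an isometric embedding to a single connected component. -/
lemma restrict_comp {G : SimpleGraph V} {U : SimpleGraph X} {φ : V → X}
    (h : IsIsometricEmbedding G U φ) (c : G.ConnectedComponent) :
    IsIsometricEmbedding (G.induce c.supp) (U.induce (compMap h c).supp)
      (fun v => ⟨φ v.1, mem_supp_compMap h v.2⟩) := by
  constructor
  · intro u v huv
    exact h.1 u.1 v.1 huv
  · intro u v
    rw [edist_induce_of_closed (supp_closed c) u.1 v.1 u.2 v.2,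
      edist_induce_of_closed (supp_closed _) _ _ _ _]
    exact h.2 u.1 v.1

lemma restrict_comp' {G : SimpleGraph V} {U : SimpleGraph X} {φ : V → X}
    (h : IsIsometricEmbedding G U φ) {c : G.ConnectedComponent} {K : U.ConnectedComponent}
    (hK : compMap h c = K) :
    ∃ g : c.supp → K.supp, IsIsometricEmbedding (G.induce c.supp) (U.induce K.supp) g := by
  subst hK
  exact ⟨_, restrict_comp h c⟩

lemma comp_surj {G : SimpleGraph V} : Function.Surjective G.connectedComponentMk :=
  fun c => SimpleGraph.ConnectedComponent.ind (fun v => ⟨v, rfl⟩) c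

lemma card_supp_le {G : SimpleGraph V} {U : SimpleGraph X} {φ : V → X} [Finite X]
    (h : IsIsometricEmbedding G U φ) (c : G.ConnectedComponent) :
    Nat.card c.supp ≤ Nat.card (compMap h c).supp :=
  Nat.card_le_card_of_injective
    (fun v : c.supp => (⟨φ v.1, mem_supp_compMap h v.2⟩ : (compMap h c).supp))
    (fun u v huv => Subtype.ext (emb_injective h (congrArg Subtype.val huv)))

/-- Transport of an isometric embedding along an equivalence of the ambient vertex set. -/
lemma emb_comap_equiv {G : SimpleGraph V} {U : SimpleGraph X} {φ : V → X}
    (h : IsIsometricEmbedding G U φ) (e : X ≃ Y) :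
    IsIsometricEmbedding G (U.comap e.symm) (fun v => e (φ v)) := by
  constructor
  · intro u v huv
    simpa using h.1 u v huv
  · intro u v
    rw [h.2 u v]
    refine le_antisymm ?_ ?_
    · have := edist_le_of_map (A := U.comap e.symm) (B := U) e.symm
        (fun a b hab => Or.inl hab) (e (φ u)) (e (φ v))
      simpa using this
    · exact edist_le_of_map (A := U) (B := U.comap e.symm) e
        (fun a b hab => Or.inl (by simpa using hab)) _ _

lemma universal_comap_equiv {G : SimpleGraph V} {H : SimpleGraph W} {U : SimpleGraph X}
    (h : IsIsoUniversalPair G H U) (e : X ≃ Y) :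
    IsIsoUniversalPair G H (U.comap e.symm) := by
  obtain ⟨⟨φ, hφ⟩, ⟨ψ, hψ⟩⟩ := h
  exact ⟨⟨_, emb_comap_equiv hφ e⟩, ⟨_, emb_comap_equiv hψ e⟩⟩

lemma mem_optSet_of_universal {G : SimpleGraph V} {H : SimpleGraph W} {U : SimpleGraph X}
    [Finite X] (h : IsIsoUniversalPair G H U) :
    Nat.card X ∈ {n : ℕ | ∃ U' : SimpleGraph (Fin n), IsIsoUniversalPair G H U'} :=
  ⟨U.comap (Finite.equivFin X).symm, universal_comap_equiv h (Finite.equivFin X)⟩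

lemma optPair_le_of_universal {G : SimpleGraph V} {H : SimpleGraph W} {U : SimpleGraph X}
    [Finite X] (h : IsIsoUniversalPair G H U) : optPair G H ≤ Nat.card X :=
  Nat.sInf_le (mem_optSet_of_universal h)

lemma exists_opt_graph {G : SimpleGraph V} {H : SimpleGraph W} {U : SimpleGraph X}
    [Finite X] (h : IsIsoUniversalPair G H U) :
    ∃ U' : SimpleGraph (Fin (optPair G H)), IsIsoUniversalPair G H U' :=
  Nat.sInf_mem (⟨_, mem_optSet_of_universal h⟩ :
    {n : ℕ | ∃ U' : SimpleGraph (Fin n), IsIsoUniversalPair G H U'}.Nonempty)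

end IsoUnivAux

namespace IsoUnivAux

variable {V W X Y : Type}

section Wedge

variable {α β : Type} (A : SimpleGraph α) (B : SimpleGraph β) (x₀ : α) (y₀ : β)

/-- The one-point union (wedge) of two graphs, gluing `x₀` to `y₀`. -/
def wedge : SimpleGraph (α ⊕ {y : β // y ≠ y₀}) where
  Adj u v := match u, v with
    | Sum.inl a, Sum.inl b => A.Adj a b
    | Sum.inr a, Sum.inr b => B.Adj a.1 b.1
    | Sum.inl a, Sum.inr b => a = x₀ ∧ B.Adj y₀ b.1
    | Sum.inr a, Sum.inl b => b = x₀ ∧ B.Adj y₀ a.1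
  symm := ⟨by
    rintro (a | a) (b | b) h
    · exact A.adj_symm h
    · exact h
    · exact h
    · exact B.adj_symm h⟩
  loopless := ⟨by
    rintro (a | a) h
    · exact A.irrefl h
    · exact B.irrefl h⟩

variable {A B x₀ y₀}

lemma wedge_left_isometric : IsIsometricEmbedding A (wedge A B x₀ y₀) Sum.inl := by
  constructor
  · exact fun u v h => h
  · intro u v
    refine le_antisymm ?_ ?_
    · have := edist_le_of_map (A := wedge A B x₀ y₀) (B := A) (Sum.elim id fun _ => x₀) ?_
        (Sum.inl u) (Sum.inl v)
      · simpa using this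
      · rintro (a | a) (b | b) h
        · exact Or.inl h
        · exact Or.inr (by simp [h.1])
        · exact Or.inr (by simp [h.1])
        · exact Or.inr rfl
    · exact edist_le_of_map Sum.inl (fun a b h => Or.inl h) u v

open Classical in
/-- The embedding of the right-hand graph into the wedge. -/
noncomputable def wedgeRight : β → α ⊕ {y : β // y ≠ y₀} := fun y =>
  if h : y = y₀ then Sum.inl x₀ else Sum.inr ⟨y, h⟩

lemma wedge_right_isometric :
    IsIsometricEmbedding B (wedge A B x₀ y₀) (wedgeRight (x₀ := x₀)) := by
  have hom : ∀ u v, B.Adj u v →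
      (wedge A B x₀ y₀).Adj (wedgeRight (x₀ := x₀) u) (wedgeRight (x₀ := x₀) v) := by
    intro u v h
    unfold wedgeRight
    by_cases hu : u = y₀ <;> by_cases hv : v = y₀
    · rw [hu, hv] at h
      exact absurd h B.irrefl
    · simp only [dif_pos hu, dif_neg hv]
      exact ⟨rfl, hu ▸ h⟩
    · simp only [dif_neg hu, dif_pos hv]
      exact ⟨rfl, B.adj_symm (hv ▸ h)⟩
    · simp only [dif_neg hu, dif_neg hv]
      exact h
  constructor
  · exact hom
  · intro u v
    refine le_antisymm ?_ ?_
    · have := edist_le_of_map (A := wedge A B x₀ y₀) (B := B)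
        (Sum.elim (fun _ => y₀) Subtype.val) ?_
        (wedgeRight (x₀ := x₀) u) (wedgeRight (x₀ := x₀) v)
      · have hu : Sum.elim (fun _ => y₀) (Subtype.val) (wedgeRight (x₀ := x₀) (y₀ := y₀) u) = u := by
          unfold wedgeRight
          by_cases h : u = y₀ <;> simp [h]
        have hv : Sum.elim (fun _ => y₀) (Subtype.val) (wedgeRight (x₀ := x₀) (y₀ := y₀) v) = v := by
          unfold wedgeRight
          by_cases h : v = y₀ <;> simp [h]
        rwa [hu, hv] at this
      · rintro (a | a) (b | b) h
        · exact Or.inr rfl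
        · exact Or.inl h.2
        · exact Or.inl (B.adj_symm h.2)
        · exact Or.inl h
    · exact edist_le_of_map (wedgeRight (x₀ := x₀)) (fun a b h => Or.inl (hom a b h)) u v

end Wedge

section Emb

variable {G : SimpleGraph V} {U : SimpleGraph X} {φ : V → X}

lemma emb_left (hφ : IsIsometricEmbedding G U φ) (S : Set X)
    (hS : ∀ a b, U.Adj a b → (a ∈ S ↔ b ∈ S)) (hmem : ∀ v, φ v ∈ S)
    (Z : SimpleGraph Y) :
    IsIsometricEmbedding G ((U.induce S) ⊕g Z)
      (fun v => Sum.inl ⟨φ v, hmem v⟩) := by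
  constructor
  · intro u v h
    exact hφ.1 u v h
  · intro u v
    rw [sum_edist_inl, edist_induce_of_closed hS _ _ _ _]
    exact hφ.2 u v

lemma emb_mixed (hφ : IsIsometricEmbedding G U φ) (S : Set X)
    (hS : ∀ a b, U.Adj a b → (a ∈ S ↔ b ∈ S))
    (c : G.ConnectedComponent) [DecidablePred (· ∈ c.supp)]
    (hmem : ∀ v, v ∉ c.supp → φ v ∈ S)
    {Z : SimpleGraph Y} {g : c.supp → Y}
    (hg : IsIsometricEmbedding (G.induce c.supp) Z g) :
    IsIsometricEmbedding G ((U.induce S) ⊕g Z)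
      (fun v => if h : v ∈ c.supp then Sum.inr (g ⟨v, h⟩) else Sum.inl ⟨φ v, hmem v h⟩) := by
  constructor
  · intro u v h
    have hsame := supp_closed c u v h
    by_cases hu : u ∈ c.supp
    · have hv : v ∈ c.supp := hsame.mp hu
      simp only [dif_pos hu, dif_pos hv]
      exact hg.1 ⟨u, hu⟩ ⟨v, hv⟩ h
    · have hv : v ∉ c.supp := fun h' => hu (hsame.mpr h')
      simp only [dif_neg hu, dif_neg hv]
      exact hφ.1 u v h
  · intro u v
    by_cases hu : u ∈ c.supp <;> by_cases hv : v ∈ c.supp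
    · simp only [dif_pos hu, dif_pos hv]
      rw [sum_edist_inr, ← hg.2 ⟨u, hu⟩ ⟨v, hv⟩,
        edist_induce_of_closed (supp_closed c) u v hu hv]
    · simp only [dif_pos hu, dif_neg hv]
      rw [SimpleGraph.edist_comm (u := Sum.inr (g ⟨u, hu⟩)), sum_edist_inl_inr]
      refine edist_eq_top_of_ne_comp ?_
      rw [SimpleGraph.ConnectedComponent.mem_supp_iff] at hu hv
      rw [hu]
      exact fun h => hv h.symm
    · simp only [dif_neg hu, dif_pos hv]
      rw [sum_edist_inl_inr]
      refine edist_eq_top_of_ne_comp ?_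
      rw [SimpleGraph.ConnectedComponent.mem_supp_iff] at hu hv
      rw [hv]
      exact hu
    · simp only [dif_neg hu, dif_neg hv]
      rw [sum_edist_inl, edist_induce_of_closed hS _ _ _ _]
      exact hφ.2 u v

end Emb

section Counting

lemma nat_card_split {α : Type} [Fintype α] (Q : α → Prop) :
    Nat.card {x // Q x} + Nat.card {x // ¬ Q x} = Nat.card α := by
  classical
  simp only [Nat.card_eq_fintype_card]
  rw [Fintype.card_subtype_compl]
  have : Fintype.card {x // Q x} ≤ Fintype.card α := Fintype.card_subtype_le _
  omega

lemma nat_card_or {α : Type} [Fintype α] (Q R : α → Prop) (h : ∀ x, Q x → R x → False) :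
    Nat.card {x // Q x ∨ R x} = Nat.card {x // Q x} + Nat.card {x // R x} := by
  classical
  rw [Nat.card_congr (subtypeOrEquiv Q R ?_), Nat.card_sum]
  exact disjoint_iff_inf_le.mpr (fun x hx => (h x hx.1 hx.2).elim)

lemma supp_card_pos {V : Type} {G : SimpleGraph V} [Finite V] (c : G.ConnectedComponent) :
    1 ≤ Nat.card c.supp := by
  obtain ⟨v, hv⟩ := comp_surj (G := G) c
  haveI : Nonempty c.supp := ⟨⟨v, hv⟩⟩
  exact Nat.card_pos

lemma nat_card_eq_pred {β : Type} [Fintype β] (y₀ : β) :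
    Nat.card {y : β // y ≠ y₀} = Nat.card β - 1 := by
  classical
  have h := nat_card_split (fun y : β => y = y₀)
  have h1 : Nat.card {y : β // y = y₀} = 1 := by
    rw [Nat.card_eq_one_iff_unique]
    exact ⟨⟨fun x y => Subtype.ext (x.2.trans y.2.symm)⟩, ⟨⟨y₀, rfl⟩⟩⟩
  have h2 : Nat.card {y : β // ¬ y = y₀} = Nat.card {y : β // y ≠ y₀} := rfl
  omega

lemma card_eq_sum_supp {α : Type} [Fintype α] (A : SimpleGraph α)
    [Fintype A.ConnectedComponent] :
    Nat.card α = ∑ K : A.ConnectedComponent, Nat.card K.supp := by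
  classical
  rw [← Nat.card_congr (Equiv.sigmaFiberEquiv (A.connectedComponentMk)),
    Nat.card_eq_fintype_card, Fintype.card_sigma]
  exact Finset.sum_congr rfl fun K _ => (Nat.card_eq_fintype_card).symm

end Counting

end IsoUnivAux
/-- Let `U` be a minimum and minimal isometric-universal graph for
`{G, H}`, where `G` has `s` components, `H` has `r` components and `s ≤ r`, with fixed
isometric embeddings `φ` of `G` and `ψ` of `H` into `U`. Let `D` be the set of pairs of
components of `G` and `H` whose images lie in a common component of `U`. Then `D` is a
matching of size `s`, and
`|V(U)| = |V(G)| + |V(H)| - ∑_{(i,j) ∈ D} (|V(G_i)| + |V(H_j)| - opt(G_i, H_j))`. -/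
theorem stmt_6 {V W X : Type} [Fintype V] [Fintype W] [Fintype X]
    (G : SimpleGraph V) (H : SimpleGraph W) (U : SimpleGraph X)
    (hsr : Nat.card G.ConnectedComponent ≤ Nat.card H.ConnectedComponent)
    (φ : V → X) (ψ : W → X)
    (hφ : IsIsometricEmbedding G U φ) (hψ : IsIsometricEmbedding H U ψ)
    (hmin : ∀ (Y : Type) (_ : Finite Y) (U' : SimpleGraph Y),
      IsIsoUniversalPair G H U' → Nat.card X ≤ Nat.card Y)
    (hminimal : ∀ H' : U.Subgraph, H' ≠ ⊤ → ¬ IsIsoUniversalPair G H H'.coe)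
    (D : Finset (G.ConnectedComponent × H.ConnectedComponent))
    (hD : ∀ (c : G.ConnectedComponent) (d : H.ConnectedComponent),
      (c, d) ∈ D ↔ ∃ (x : V) (y : W), G.connectedComponentMk x = c ∧
        H.connectedComponentMk y = d ∧
        U.connectedComponentMk (φ x) = U.connectedComponentMk (ψ y)) :
    IsCompMatching D ∧ D.card = Nat.card G.ConnectedComponent ∧
      Nat.card X = Nat.card V + Nat.card W - ∑ p ∈ D, compWeight G H p.1 p.2 := by
  classical
  haveI : Finite G.ConnectedComponent := Finite.of_surjective _ IsoUnivAux.comp_surj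
  haveI : Finite H.ConnectedComponent := Finite.of_surjective _ IsoUnivAux.comp_surj
  haveI : Finite U.ConnectedComponent := Finite.of_surjective _ IsoUnivAux.comp_surj
  haveI : Fintype G.ConnectedComponent := Fintype.ofFinite _
  haveI : Fintype H.ConnectedComponent := Fintype.ofFinite _
  haveI : Fintype U.ConnectedComponent := Fintype.ofFinite _
  set Φ : G.ConnectedComponent → U.ConnectedComponent := IsoUnivAux.compMap hφ with hΦdef
  set Ψ : H.ConnectedComponent → U.ConnectedComponent := IsoUnivAux.compMap hψ with hΨdef
  have hΦinj : Function.Injective Φ := IsoUnivAux.compMap_injective hφ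
  have hΨinj : Function.Injective Ψ := IsoUnivAux.compMap_injective hψ
  have hD' : ∀ c d, ((c, d) ∈ D) ↔ Φ c = Ψ d := by
    intro c d
    rw [hD]
    constructor
    · rintro ⟨x, y, rfl, rfl, hxy⟩
      exact hxy
    · intro h
      obtain ⟨x, hx⟩ := IsoUnivAux.comp_surj (G := G) c
      obtain ⟨y, hy⟩ := IsoUnivAux.comp_surj (G := H) d
      refine ⟨x, y, hx, hy, ?_⟩
      show Φ (G.connectedComponentMk x) = Ψ (H.connectedComponentMk y)
      rw [hx, hy, h]
  -- generic replacement bound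
  have repl : ∀ (T : Set U.ConnectedComponent) (Y : Type) (_ : Finite Y) (Z : SimpleGraph Y),
      IsIsoUniversalPair G H ((U.induce {x | U.connectedComponentMk x ∉ T}) ⊕g Z) →
      Nat.card X ≤ Nat.card {x : X // ¬ (U.connectedComponentMk x ∈ T)} + Nat.card Y := by
    intro T Y hY Z huniv
    haveI := hY
    have h := hmin _ (by infer_instance) _ huniv
    rw [Nat.card_sum] at h
    exact h
  have hKsupp : ∀ K : U.ConnectedComponent,
      Nat.card {x : X // U.connectedComponentMk x ∈ ({K} : Set U.ConnectedComponent)} =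
        Nat.card K.supp :=
    fun K => Nat.card_congr (Equiv.subtypeEquivRight (fun x => by simp))
  have hsplit1 : ∀ K : U.ConnectedComponent,
      Nat.card K.supp +
        Nat.card {x : X // ¬ (U.connectedComponentMk x ∈ ({K} : Set U.ConnectedComponent))} =
        Nat.card X := by
    intro K
    rw [← hKsupp K]
    exact IsoUnivAux.nat_card_split _
  -- Fact 1 : matched components have optimal size
  have hmatched : ∀ (c : G.ConnectedComponent) (d : H.ConnectedComponent), Φ c = Ψ d →
      Nat.card (Φ c).supp = optPair (G.induce c.supp) (H.induce d.supp) := by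
    intro c d hcd
    have hKuniv : IsIsoUniversalPair (G.induce c.supp) (H.induce d.supp)
        (U.induce (Φ c).supp) :=
      ⟨IsoUnivAux.restrict_comp' hφ rfl, IsoUnivAux.restrict_comp' hψ hcd.symm⟩
    have hopt_le : optPair (G.induce c.supp) (H.induce d.supp) ≤ Nat.card (Φ c).supp :=
      IsoUnivAux.optPair_le_of_universal hKuniv
    obtain ⟨Z, hZG, hZH⟩ := IsoUnivAux.exists_opt_graph hKuniv
    obtain ⟨gG, hgG⟩ := hZG
    obtain ⟨gH, hgH⟩ := hZH
    have memG : ∀ v, v ∉ c.supp →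
        φ v ∈ {x | U.connectedComponentMk x ∉ ({Φ c} : Set U.ConnectedComponent)} := by
      intro v hv hmem
      exact hv (hΦinj (hmem : Φ (G.connectedComponentMk v) = Φ c))
    have memH : ∀ w, w ∉ d.supp →
        ψ w ∈ {x | U.connectedComponentMk x ∉ ({Φ c} : Set U.ConnectedComponent)} := by
      intro w hw hmem
      exact hw (hΨinj ((hmem : Ψ (H.connectedComponentMk w) = Φ c).trans hcd))
    have hembG := IsoUnivAux.emb_mixed hφ
      {x | U.connectedComponentMk x ∉ ({Φ c} : Set U.ConnectedComponent)}
      (IsoUnivAux.closed_pred (fun J => J ∉ ({Φ c} : Set U.ConnectedComponent))) c memG hgG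
    have hembH := IsoUnivAux.emb_mixed hψ
      {x | U.connectedComponentMk x ∉ ({Φ c} : Set U.ConnectedComponent)}
      (IsoUnivAux.closed_pred (fun J => J ∉ ({Φ c} : Set U.ConnectedComponent))) d memH hgH
    have hle := repl {Φ c} _ inferInstance Z ⟨⟨_, hembG⟩, ⟨_, hembH⟩⟩
    have hfin : Nat.card (Fin (optPair (G.induce c.supp) (H.induce d.supp))) =
        optPair (G.induce c.supp) (H.induce d.supp) := by simp
    have h1 := hsplit1 (Φ c)
    omega
  -- Fact 2 : components hit only by H have the size of that component
  have honly : ∀ d : H.ConnectedComponent, (∀ c, Φ c ≠ Ψ d) →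
      Nat.card (Ψ d).supp = Nat.card d.supp := by
    intro d hd
    have hge : Nat.card d.supp ≤ Nat.card (Ψ d).supp := IsoUnivAux.card_supp_le hψ d
    have memG : ∀ v,
        φ v ∈ {x | U.connectedComponentMk x ∉ ({Ψ d} : Set U.ConnectedComponent)} := by
      intro v hmem
      exact hd (G.connectedComponentMk v) hmem
    have memH : ∀ w, w ∉ d.supp →
        ψ w ∈ {x | U.connectedComponentMk x ∉ ({Ψ d} : Set U.ConnectedComponent)} := by
      intro w hw hmem
      exact hw (hΨinj (hmem : Ψ (H.connectedComponentMk w) = Ψ d))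
    have hid : IsIsometricEmbedding (H.induce d.supp) (H.induce d.supp) (fun y => y) :=
      ⟨fun u v h => h, fun u v => rfl⟩
    have hembG := IsoUnivAux.emb_left hφ
      {x | U.connectedComponentMk x ∉ ({Ψ d} : Set U.ConnectedComponent)}
      (IsoUnivAux.closed_pred (fun J => J ∉ ({Ψ d} : Set U.ConnectedComponent))) memG
      (H.induce d.supp)
    have hembH := IsoUnivAux.emb_mixed hψ
      {x | U.connectedComponentMk x ∉ ({Ψ d} : Set U.ConnectedComponent)}
      (IsoUnivAux.closed_pred (fun J => J ∉ ({Ψ d} : Set U.ConnectedComponent))) d memH hid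
    have hle := repl {Ψ d} _ inferInstance (H.induce d.supp) ⟨⟨_, hembG⟩, ⟨_, hembH⟩⟩
    have h1 := hsplit1 (Ψ d)
    omega
  -- Fact 3 : every component of U is hit
  have allhit : ∀ K : U.ConnectedComponent, (∃ c, Φ c = K) ∨ (∃ d, Ψ d = K) := by
    intro K
    by_contra hK
    push_neg at hK
    obtain ⟨hK1, hK2⟩ := hK
    have memG : ∀ v,
        φ v ∈ {x | U.connectedComponentMk x ∉ ({K} : Set U.ConnectedComponent)} := by
      intro v hmem
      exact hK1 (G.connectedComponentMk v) hmem
    have memH : ∀ w,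
        ψ w ∈ {x | U.connectedComponentMk x ∉ ({K} : Set U.ConnectedComponent)} := by
      intro w hmem
      exact hK2 (H.connectedComponentMk w) hmem
    have hembG := IsoUnivAux.emb_left hφ
      {x | U.connectedComponentMk x ∉ ({K} : Set U.ConnectedComponent)}
      (IsoUnivAux.closed_pred (fun J => J ∉ ({K} : Set U.ConnectedComponent))) memG
      (⊥ : SimpleGraph Empty)
    have hembH := IsoUnivAux.emb_left hψ
      {x | U.connectedComponentMk x ∉ ({K} : Set U.ConnectedComponent)}
      (IsoUnivAux.closed_pred (fun J => J ∉ ({K} : Set U.ConnectedComponent))) memH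
      (⊥ : SimpleGraph Empty)
    have hle := repl {K} Empty inferInstance ⊥ ⟨⟨_, hembG⟩, ⟨_, hembH⟩⟩
    have h0 : Nat.card Empty = 0 := by simp
    have h1 := hsplit1 K
    have h2 := IsoUnivAux.supp_card_pos K
    omega
  -- wedge graphs give universal pairs
  have wedgeuniv : ∀ (c : G.ConnectedComponent) (d : H.ConnectedComponent),
      ∃ (x₀ : c.supp) (y₀ : d.supp), IsIsoUniversalPair (G.induce c.supp) (H.induce d.supp)
        (IsoUnivAux.wedge (G.induce c.supp) (H.induce d.supp) x₀ y₀) := by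
    intro c d
    obtain ⟨x, hx⟩ := IsoUnivAux.comp_surj (G := G) c
    obtain ⟨y, hy⟩ := IsoUnivAux.comp_surj (G := H) d
    exact ⟨⟨x, hx⟩, ⟨y, hy⟩, ⟨_, IsoUnivAux.wedge_left_isometric⟩,
      ⟨_, IsoUnivAux.wedge_right_isometric⟩⟩
  have optwedge : ∀ (c : G.ConnectedComponent) (d : H.ConnectedComponent),
      optPair (G.induce c.supp) (H.induce d.supp) ≤
        Nat.card c.supp + Nat.card d.supp - 1 := by
    intro c d
    obtain ⟨x₀, y₀, huniv⟩ := wedgeuniv c d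
    have hle := IsoUnivAux.optPair_le_of_universal huniv
    have hsum : Nat.card (↥c.supp ⊕ {y : d.supp // y ≠ y₀}) =
        Nat.card c.supp + Nat.card {y : d.supp // y ≠ y₀} := Nat.card_sum
    have hpred := IsoUnivAux.nat_card_eq_pred y₀
    have hbpos := IsoUnivAux.supp_card_pos d
    omega
  -- Fact 4 : every component of G is matched
  have allmatched : ∀ c, ∃ d, Φ c = Ψ d := by
    intro c
    by_contra hc
    push_neg at hc
    have hexd : ∃ d, ∀ c', Φ c' ≠ Ψ d := by
      by_contra hall
      push_neg at hall
      choose m hm using hall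
      have hminj : Function.Injective m := by
        intro d d' h
        exact hΨinj ((hm d).symm.trans (h ▸ hm d'))
      have hmc : ∀ d, m d ≠ c := fun d h => hc d (h ▸ hm d)
      have hle : Nat.card H.ConnectedComponent ≤
          Nat.card {c' : G.ConnectedComponent // ¬ c' = c} :=
        Nat.card_le_card_of_injective (fun d => ⟨m d, hmc d⟩)
          (fun d d' h => hminj (congrArg Subtype.val h))
      have hsplit := IsoUnivAux.nat_card_split (fun c' : G.ConnectedComponent => c' = c)
      have h1 : Nat.card {c' : G.ConnectedComponent // c' = c} = 1 := by
        rw [Nat.card_eq_one_iff_unique]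
        exact ⟨⟨fun x y => Subtype.ext (x.2.trans y.2.symm)⟩, ⟨⟨c, rfl⟩⟩⟩
      omega
    obtain ⟨d, hd⟩ := hexd
    obtain ⟨x₀, y₀, ⟨gG, hgG⟩, ⟨gH, hgH⟩⟩ := wedgeuniv c d
    have memG : ∀ v, v ∉ c.supp →
        φ v ∈ {x | U.connectedComponentMk x ∉ ({Φ c, Ψ d} : Set U.ConnectedComponent)} := by
      intro v hv hmem
      rcases hmem with h | h
      · exact hv (hΦinj h)
      · exact hd (G.connectedComponentMk v) h
    have memH : ∀ w, w ∉ d.supp →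
        ψ w ∈ {x | U.connectedComponentMk x ∉ ({Φ c, Ψ d} : Set U.ConnectedComponent)} := by
      intro w hw hmem
      rcases hmem with h | h
      · exact hc (H.connectedComponentMk w) h.symm
      · exact hw (hΨinj h)
    have hembG := IsoUnivAux.emb_mixed hφ
      {x | U.connectedComponentMk x ∉ ({Φ c, Ψ d} : Set U.ConnectedComponent)}
      (IsoUnivAux.closed_pred (fun J => J ∉ ({Φ c, Ψ d} : Set U.ConnectedComponent))) c memG hgG
    have hembH := IsoUnivAux.emb_mixed hψ
      {x | U.connectedComponentMk x ∉ ({Φ c, Ψ d} : Set U.ConnectedComponent)}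
      (IsoUnivAux.closed_pred (fun J => J ∉ ({Φ c, Ψ d} : Set U.ConnectedComponent))) d memH hgH
    have hle := repl {Φ c, Ψ d} _ inferInstance _ ⟨⟨_, hembG⟩, ⟨_, hembH⟩⟩
    have hsum : Nat.card (↥c.supp ⊕ {y : d.supp // y ≠ y₀}) =
        Nat.card c.supp + Nat.card {y : d.supp // y ≠ y₀} := Nat.card_sum
    have hpred := IsoUnivAux.nat_card_eq_pred y₀
    have hor : Nat.card {x : X // U.connectedComponentMk x = Φ c ∨
          U.connectedComponentMk x = Ψ d} =
        Nat.card {x : X // U.connectedComponentMk x = Φ c} +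
          Nat.card {x : X // U.connectedComponentMk x = Ψ d} :=
      IsoUnivAux.nat_card_or _ _ (fun x h1 h2 => hc d (h1.symm.trans h2))
    have hsplitT : Nat.card {x : X // U.connectedComponentMk x = Φ c ∨
          U.connectedComponentMk x = Ψ d} +
        Nat.card {x : X // ¬ (U.connectedComponentMk x = Φ c ∨
          U.connectedComponentMk x = Ψ d)} = Nat.card X :=
      IsoUnivAux.nat_card_split _
    have hlink : Nat.card {x : X // ¬ (U.connectedComponentMk x = Φ c ∨
        U.connectedComponentMk x = Ψ d)} =
        Nat.card {x : X // ¬ (U.connectedComponentMk x ∈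
          ({Φ c, Ψ d} : Set U.ConnectedComponent))} := rfl
    have e1 : Nat.card {x : X // U.connectedComponentMk x = Φ c} = Nat.card (Φ c).supp := rfl
    have e2 : Nat.card {x : X // U.connectedComponentMk x = Ψ d} = Nat.card (Ψ d).supp := rfl
    have hha : Nat.card c.supp ≤ Nat.card (Φ c).supp := IsoUnivAux.card_supp_le hφ c
    have hhb : Nat.card d.supp ≤ Nat.card (Ψ d).supp := IsoUnivAux.card_supp_le hψ d
    have hbpos := IsoUnivAux.supp_card_pos d
    omega
  -- the matching property
  have hmatch : IsCompMatching D := by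
    constructor
    · rintro ⟨c1, d1⟩ hp ⟨c2, d2⟩ hq h
      obtain rfl : c1 = c2 := h
      have e1 := (hD' c1 d1).mp hp
      have e2 := (hD' c1 d2).mp hq
      rw [hΨinj (e1.symm.trans e2)]
    · rintro ⟨c1, d1⟩ hp ⟨c2, d2⟩ hq h
      obtain rfl : d1 = d2 := h
      have e1 := (hD' c1 d1).mp hp
      have e2 := (hD' c2 d1).mp hq
      rw [hΦinj (e1.trans e2.symm)]
  -- cardinality of D
  have hcard : D.card = Nat.card G.ConnectedComponent := by
    rw [Nat.card_eq_fintype_card, ← Finset.card_univ]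
    apply Finset.card_bij (fun p _ => p.1)
    · exact fun p hp => Finset.mem_univ _
    · exact fun p hp q hq h => hmatch.1 p hp q hq h
    · intro c _
      obtain ⟨d, hd⟩ := allmatched c
      exact ⟨(c, d), (hD' c d).mpr hd, rfl⟩
  refine ⟨hmatch, hcard, ?_⟩
  -- the counting argument
  choose pr hpr using allmatched
  have hprinj : Function.Injective pr := by
    intro c c' h
    exact hΦinj ((hpr c).trans (h ▸ (hpr c').symm))
  have hDimg : D = Finset.image (fun c => (c, pr c)) Finset.univ := by
    ext ⟨c, d⟩
    simp only [Finset.mem_image, Finset.mem_univ, true_and]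
    rw [hD' c d]
    constructor
    · intro h
      have hdp : d = pr c := hΨinj (h.symm.trans (hpr c))
      exact ⟨c, by rw [hdp]⟩
    · rintro ⟨c', hc'⟩
      injection hc' with h1 h2
      subst h1; subst h2
      exact hpr c'
  have himginj : ∀ a ∈ (Finset.univ : Finset G.ConnectedComponent),
      ∀ b ∈ (Finset.univ : Finset G.ConnectedComponent),
      (fun c => (c, pr c)) a = (fun c => (c, pr c)) b → a = b :=
    fun a _ b _ h => (Prod.mk.injEq _ _ _ _ ▸ h : a = b ∧ _).1
  have hX : Nat.card X = ∑ K : U.ConnectedComponent, Nat.card K.supp :=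
    IsoUnivAux.card_eq_sum_supp U
  have hV : Nat.card V = ∑ c : G.ConnectedComponent, Nat.card c.supp :=
    IsoUnivAux.card_eq_sum_supp G
  have hW : Nat.card W = ∑ d : H.ConnectedComponent, Nat.card d.supp :=
    IsoUnivAux.card_eq_sum_supp H
  have hsplitsum := Finset.sum_filter_add_sum_filter_not Finset.univ
    (fun K => ∃ c, Φ c = K) (fun K : U.ConnectedComponent => Nat.card K.supp)
  have hfilt1 : Finset.univ.filter (fun K => ∃ c, Φ c = K) = Finset.image Φ Finset.univ := by
    ext K
    simp only [Finset.mem_filter, Finset.mem_univ, true_and, Finset.mem_image]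
  have hsum1 : ∑ K ∈ Finset.image Φ Finset.univ, Nat.card K.supp =
      ∑ c : G.ConnectedComponent, Nat.card (Φ c).supp :=
    Finset.sum_image (fun a _ b _ h => hΦinj h)
  set B := Finset.univ.filter (fun d : H.ConnectedComponent => ∀ c, Φ c ≠ Ψ d) with hBdef
  have hfilt2 : Finset.univ.filter (fun K => ¬ ∃ c, Φ c = K) = Finset.image Ψ B := by
    ext K
    simp only [Finset.mem_filter, Finset.mem_univ, true_and, Finset.mem_image, hBdef]
    constructor
    · intro hK
      rcases allhit K with ⟨c, hcK⟩ | ⟨d, hdK⟩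
      · exact absurd ⟨c, hcK⟩ hK
      · exact ⟨d, fun c hcd => hK ⟨c, hcd.trans hdK⟩, hdK⟩
    · rintro ⟨d, hdB, rfl⟩ ⟨c, hcK⟩
      exact hdB c hcK
  have hsum2 : ∑ K ∈ Finset.image Ψ B, Nat.card K.supp = ∑ d ∈ B, Nat.card (Ψ d).supp :=
    Finset.sum_image (fun a _ b _ h => hΨinj h)
  have hWsplit := Finset.sum_filter_add_sum_filter_not Finset.univ
    (fun d : H.ConnectedComponent => ∀ c, Φ c ≠ Ψ d)
    (fun d : H.ConnectedComponent => Nat.card d.supp)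
  have hfilt3 : Finset.univ.filter
      (fun d : H.ConnectedComponent => ¬ ∀ c, Φ c ≠ Ψ d) = Finset.image pr Finset.univ := by
    ext d
    simp only [Finset.mem_filter, Finset.mem_univ, true_and, Finset.mem_image,
      not_forall, ne_eq, not_not]
    constructor
    · rintro ⟨c, hcd⟩
      exact ⟨c, hΨinj ((hpr c).symm.trans hcd)⟩
    · rintro ⟨c, rfl⟩
      exact ⟨c, hpr c⟩
  have hsum3 : ∑ d ∈ Finset.image pr Finset.univ, Nat.card d.supp =
      ∑ c : G.ConnectedComponent, Nat.card (pr c).supp :=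
    Finset.sum_image (fun a _ b _ h => hprinj h)
  have hXsum : Nat.card X =
      ∑ c : G.ConnectedComponent, optPair (G.induce c.supp) (H.induce (pr c).supp) +
        ∑ d ∈ B, Nat.card d.supp := by
    rw [hX, ← hsplitsum, hfilt1, hfilt2, hsum1, hsum2]
    congr 1
    · exact Finset.sum_congr rfl fun c _ => hmatched c (pr c) (hpr c)
    · exact Finset.sum_congr rfl fun d hd => honly d (Finset.mem_filter.mp hd).2
  have hWsum : Nat.card W = ∑ d ∈ B, Nat.card d.supp +
      ∑ c : G.ConnectedComponent, Nat.card (pr c).supp := by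
    rw [hW, ← hWsplit, hfilt3, hsum3]
  have hsumcw : ∑ q ∈ D, compWeight G H q.1 q.2 =
      ∑ c : G.ConnectedComponent, compWeight G H c (pr c) := by
    rw [hDimg, Finset.sum_image himginj]
  have hcwkey : ∑ c : G.ConnectedComponent, compWeight G H c (pr c) +
      ∑ c : G.ConnectedComponent, optPair (G.induce c.supp) (H.induce (pr c).supp) =
      ∑ c : G.ConnectedComponent, (Nat.card c.supp + Nat.card (pr c).supp) := by
    rw [← Finset.sum_add_distrib]
    refine Finset.sum_congr rfl fun c _ => ?_
    have hle := optwedge c (pr c)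
    have hbpos := IsoUnivAux.supp_card_pos (pr c)
    have hcw : compWeight G H c (pr c) =
        Nat.card c.supp + Nat.card (pr c).supp -
          optPair (G.induce c.supp) (H.induce (pr c).supp) := rfl
    omega
  have hsplitab : ∑ c : G.ConnectedComponent, (Nat.card c.supp + Nat.card (pr c).supp) =
      ∑ c : G.ConnectedComponent, Nat.card c.supp +
        ∑ c : G.ConnectedComponent, Nat.card (pr c).supp :=
    Finset.sum_add_distrib
  rw [hsumcw]
  omega
end
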